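/- arXiv:1411.3047 — 6 statements merged into one kernel-verified Lean document; each statement's English description precedes it below -/
import Mathlib

section
/- For all positive integers Δ and g, every finite simple graph G with maximum degree Δ and girth at least g is isomorphic to a subgraph of some Δ-regular finite simple graph H with girth at least g. -/
set_option linter.unusedSectionVars false
set_option linter.unnecessarySeqFocus false
set_option maxHeartbeats 1000000

namespace ES
variable {L : Type} [DecidableEq L] {inv : L → L} (N : ℕ)

def Red (inv : L → L) (l : List L) : Prop := l.Chain' (fun a b => b ≠ inv a)

def Fop (inv : L → L) (N : ℕ) (x : L) (w : List L) : List L :=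
  if w.head? = some (inv x) then w.tail
  else if w.length < N then x :: w
  else (List.replicate (w.takeWhile (· = x)).length (inv x)) ++ w.dropWhile (· = x)

-- helpers (assume already proved; restated here)
variable (hinv : ∀ x, inv (inv x) = x) (hne : ∀ x, inv x ≠ x)

lemma takeWhile_replicate_append (a : L) (b : ℕ) (w : List L)
    (hw : ∀ y ∈ w.head?, y ≠ a) :
    (List.replicate b a ++ w).takeWhile (· = a) = List.replicate b a ∧
    (List.replicate b a ++ w).dropWhile (· = a) = w := by
  induction b with
  | zero =>
    simp only [List.replicate_zero, List.nil_append]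
    cases w with
    | nil => simp
    | cons y t =>
      have : y ≠ a := hw y rfl
      constructor
      · rw [List.takeWhile_cons_of_neg] <;> simp [this]
      · rw [List.dropWhile_cons_of_neg] <;> simp [this]
  | succ n ih =>
    rw [List.replicate_succ, List.cons_append]
    constructor
    · rw [List.takeWhile_cons_of_pos (by simp), ih.1]
    · rw [List.dropWhile_cons_of_pos (by simp), ih.2]

lemma getLast?_replicate_pos (a : L) (b : ℕ) (hb : 0 < b) :
    (List.replicate b a).getLast? = some a := by
  induction b with
  | zero => omega
  | succ n ih =>
    rcases Nat.eq_zero_or_pos n with h | h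
    · subst h; simp
    · rw [List.replicate_succ, List.getLast?_cons, ih h]
      cases n with
      | zero => omega
      | succ m => simp [List.replicate_succ]

lemma head_dropWhile_ne (x y : L) (w : List L) (h : (w.dropWhile (· = x)).head? = some y) :
    y ≠ x := by
  have := List.head?_dropWhile_not (p := (· = x)) (l := w)
  rw [h] at this
  simpa using this

lemma take_drop_decomp (x : L) (w : List L) :
    w = List.replicate (w.takeWhile (· = x)).length x ++ w.dropWhile (· = x) := by
  conv_lhs => rw [← List.takeWhile_append_dropWhile (p := (· = x)) (l := w)]
  congr 1
  apply List.eq_replicate_length.2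
  intro b hb
  have := List.mem_takeWhile_imp hb
  simpa using this

include hinv hne in
lemma red_replicate_append (x : L) (b : ℕ) {w : List L} (hw : Red inv w)
    (hhead : ∀ a ∈ w.head?, a ≠ inv x) : Red inv (List.replicate b x ++ w) := by
  induction b with
  | zero => simpa
  | succ n ih =>
    rw [List.replicate_succ, List.cons_append]
    refine List.isChain_cons.2 ⟨?_, ih⟩
    intro y hy
    rcases n with _ | n
    · simp only [List.replicate_zero, List.nil_append] at hy
      exact hhead y hy
    · rw [List.replicate_succ, List.cons_append, List.head?_cons] at hy
      simp only [Option.mem_def, Option.some.injEq] at hy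
      subst hy
      exact fun h => hne x h.symm

lemma Fop_prepend (x : L) (w : List L) (hlen : w.length < N)
    (hhead : w.head? ≠ some (inv x)) : Fop inv N x w = x :: w := by
  unfold Fop
  rw [if_neg hhead, if_pos hlen]

section main
include hinv hne

lemma Fop_length (x : L) (w : List L) (hw : w.length ≤ N) :
    (Fop inv N x w).length ≤ N := by
  unfold Fop
  split_ifs with h1 h2
  · calc w.tail.length ≤ w.length := by rw [List.length_tail]; omega
      _ ≤ N := hw
  · simpa using h2
  · rw [List.length_append, List.length_replicate]
    conv_rhs => rw [show N = w.length from le_antisymm (by omega) hw]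
    conv_rhs => rw [take_drop_decomp x w]
    simp

lemma Fop_red (x : L) (w : List L) (hw : Red inv w) : Red inv (Fop inv N x w) := by
  unfold Fop
  split_ifs with h1 h2
  · exact List.IsChain.tail hw
  · refine List.isChain_cons.2 ⟨?_, hw⟩
    intro y hy
    intro hxy
    exact h1 (by rw [← hxy]; exact hy)
  · apply red_replicate_append hinv hne
    · -- Red of dropWhile
      have : w.dropWhile (· = x) <:+ w := List.dropWhile_suffix _
      exact List.IsChain.suffix hw this
    · intro a ha hax
      have := head_dropWhile_ne x a w ha
      rw [hinv] at hax
      exact this hax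

lemma Fop_Fop (x : L) (w : List L) (hw : Red inv w) (hlen : w.length ≤ N) :
    Fop inv N (inv x) (Fop inv N x w) = w := by
  by_cases h1 : w.head? = some (inv x)
  · -- case A : cancel
    cases w with
    | nil => simp at h1
    | cons a t =>
      simp only [List.head?_cons, Option.some.injEq] at h1
      subst h1
      have hF : Fop inv N x (inv x :: t) = t := by unfold Fop; rw [if_pos (by simp)]; rfl
      rw [hF]
      apply Fop_prepend
      · simp only [List.length_cons] at hlen; omega
      · intro hc
        have hred := List.isChain_cons.1 hw
        cases ht : t.head? with
        | none => rw [ht] at hc; simp at hc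
        | some a =>
          rw [ht] at hc
          simp only [Option.some.injEq] at hc
          exact hred.1 a ht (by rw [hc])
  · by_cases h2 : w.length < N
    · -- case B : prepend then cancel
      rw [Fop_prepend N x w h2 h1]
      unfold Fop
      rw [if_pos (by simp [hinv])]
      rfl
    · -- case C : flip block
      have hlenN : w.length = N := le_antisymm hlen (by omega)
      set b := (w.takeWhile (· = x)).length with hb
      set w₀ := w.dropWhile (· = x) with hw₀
      have hdecomp : w = List.replicate b x ++ w₀ := take_drop_decomp x w
      have hw₀x : ∀ y ∈ w₀.head?, y ≠ x := by
        intro y hy; exact head_dropWhile_ne x y w hy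
      have hw₀ix : ∀ y ∈ w₀.head?, y ≠ inv x := by
        intro y hy hyx
        rcases Nat.eq_zero_or_pos b with hb0 | hbpos
        · have : w₀ = w := by rw [hdecomp, hb0]; simp
          rw [this] at hy
          exact h1 (by rw [← hyx]; exact hy)
        · -- junction from Red w
          have hch := hw
          rw [hdecomp] at hch
          have := (List.isChain_append.1 hch).2.2
          have hlast : (List.replicate b x).getLast? = some x := getLast?_replicate_pos x b hbpos
          exact (this x hlast y hy) (by rw [hyx])
      have hF : Fop inv N x w = List.replicate b (inv x) ++ w₀ := by
        unfold Fop
        rw [if_neg h1, if_neg (by omega)]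
      rw [hF]
      -- now apply Fop (inv x) to u = replicate b (inv x) ++ w₀
      have hu_head : (List.replicate b (inv x) ++ w₀).head? ≠ some (inv (inv x)) := by
        rw [hinv]
        rcases Nat.eq_zero_or_pos b with hb0 | hbpos
        · rw [hb0]; simp only [List.replicate_zero, List.nil_append]
          intro hc
          exact hw₀x x hc rfl
        · obtain ⟨n, hn⟩ := Nat.exists_eq_succ_of_ne_zero (Nat.pos_iff_ne_zero.1 hbpos)
          rw [hn, List.replicate_succ, List.cons_append, List.head?_cons]
          intro hc
          simp only [Option.some.injEq] at hc
          exact hne x hc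
      have hu_len : (List.replicate b (inv x) ++ w₀).length = N := by
        rw [List.length_append, List.length_replicate]
        rw [← hlenN, hdecomp, List.length_append, List.length_replicate]
      have htd := takeWhile_replicate_append (inv x) b w₀ (by
        intro y hy hyx
        exact hw₀ix y hy hyx)
      unfold Fop
      rw [if_neg hu_head, if_neg (by omega), htd.1, htd.2, List.length_replicate, hinv]
      exact hdecomp.symm

end main

section ball

variable [Finite L]

/-- the ball: reduced words of length ≤ N -/
def Ball (inv : L → L) (N : ℕ) : Type := {w : List L // Red inv w ∧ w.length ≤ N}

instance : Finite (Ball inv N) := by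
  unfold Ball
  have : Finite {l : List L | l.length ≤ N} := (List.finite_length_le L N).to_subtype
  exact Finite.of_injective (fun w => (⟨w.1, w.2.2⟩ : {l : List L | l.length ≤ N}))
    (fun a b h => Subtype.ext (by simpa using congrArg Subtype.val h))

include hinv hne in
/-- the permutation attached to a letter -/
def perm (x : L) : Equiv.Perm (Ball inv N) where
  toFun w := ⟨Fop inv N x w.1, Fop_red N hinv hne x w.1 w.2.1, Fop_length N hinv hne x w.1 w.2.2⟩
  invFun w := ⟨Fop inv N (inv x) w.1, Fop_red N hinv hne (inv x) w.1 w.2.1,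
    Fop_length N hinv hne (inv x) w.1 w.2.2⟩
  left_inv w := Subtype.ext (Fop_Fop N hinv hne x w.1 w.2.1 w.2.2)
  right_inv w := Subtype.ext (by
    have := Fop_Fop N hinv hne (inv x) w.1 w.2.1 w.2.2
    rwa [hinv] at this)

include hinv hne in
lemma perm_inv_eq (x : L) : (perm N hinv hne x)⁻¹ = perm N hinv hne (inv x) := by
  ext w
  show (perm N hinv hne x).symm w = _
  apply Subtype.ext
  show Fop inv N (inv x) w.1 = Fop inv N (inv x) w.1
  rfl

variable (inv) in
def emptyBall : Ball inv N := ⟨[], List.isChain_nil, by simp⟩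

include hinv hne in
lemma perm_word_apply (u : List L) (hu : Red inv u) (hlen : u.length ≤ N) :
    ((u.map (perm N hinv hne)).prod (emptyBall inv N)).1 = u := by
  induction u with
  | nil => rfl
  | cons x t ih =>
    have ht : Red inv t := List.IsChain.tail hu
    have hlt : t.length < N := by simp only [List.length_cons] at hlen; omega
    have iht := ih ht (le_of_lt hlt)
    rw [List.map_cons, List.prod_cons]
    rw [Equiv.Perm.mul_apply]
    set z := (t.map (perm N hinv hne)).prod (emptyBall inv N) with hz
    show Fop inv N x z.1 = x :: t
    rw [Fop_prepend N x z.1 (by rw [iht]; exact hlt)]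
    · rw [iht]
    · rw [iht]
      intro hc
      have := (List.isChain_cons.1 hu).1
      cases ht2 : t.head? with
      | none => rw [ht2] at hc; simp at hc
      | some a =>
        rw [ht2] at hc
        simp only [Option.some.injEq] at hc
        exact this a ht2 (by rw [hc])

include hinv hne in
lemma perm_word_ne_one (u : List L) (hu : Red inv u) (hlen : u.length ≤ N) (hne0 : u ≠ []) :
    (u.map (perm N hinv hne)).prod ≠ 1 := by
  intro h
  have := perm_word_apply N hinv hne u hu hlen
  rw [h] at this
  simp only [Equiv.Perm.one_apply] at this
  exact hne0 (by rw [← this]; rfl)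

include hinv hne in
lemma perm_injective (hN : 0 < N) : Function.Injective (perm N hinv hne) := by
  intro x y h
  have hx := perm_word_apply N hinv hne [x] (List.isChain_singleton x) (by simp; omega)
  have hy := perm_word_apply N hinv hne [y] (List.isChain_singleton y) (by simp; omega)
  simp only [List.map_cons, List.map_nil, List.prod_cons, List.prod_nil, mul_one] at hx hy
  rw [h] at hx
  rw [hx] at hy
  simpa using hy

lemma red_reverse (hinv : ∀ x, inv (inv x) = x) {u : List L} (hu : Red inv u) :
    Red inv u.reverse := by
  unfold Red List.Chain'
  rw [List.isChain_reverse]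
  refine List.IsChain.imp ?_ hu
  intro a b hab hc
  exact hab (by rw [hc, hinv])

end ball

/-- reading a walk: classify each step as within-copy or crossing (with letter) -/
inductive Reads {W' : Type} {L' : Type} (H : SimpleGraph W') (CrossP : W' → W' → L' → Prop)
    (WithinP : W' → W' → Prop) : ∀ {a b : W'}, H.Walk a b → List L' → Prop
  | nil {a : W'} : Reads H CrossP WithinP (.nil : H.Walk a a) []
  | within {a b c : W'} (h : H.Adj a b) {w : H.Walk b c} {u : List L'} (hw : WithinP a b)
      (hr : Reads H CrossP WithinP w u) : Reads H CrossP WithinP (.cons h w) u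
  | cross {a b c : W'} (h : H.Adj a b) {w : H.Walk b c} {u : List L'} {ℓ : L'} (hc : CrossP a b ℓ)
      (hr : Reads H CrossP WithinP w u) : Reads H CrossP WithinP (.cons h w) (ℓ :: u)

section graph

open SimpleGraph

variable {V : Type} [Fintype V] [DecidableEq V] (G : SimpleGraph V) [DecidableRel G.Adj] (Δ N : ℕ)

/-- deficiency of a vertex -/
def dfc (v : V) : ℕ := Δ - G.degree v

abbrev Pt : Type := Σ v : V, Fin (dfc G Δ v)

abbrev Lt : Type := Pt G Δ × Bool

def linv : Lt G Δ → Lt G Δ := fun ℓ => (ℓ.1, !ℓ.2)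

lemma linv_invol : ∀ ℓ, linv G Δ (linv G Δ ℓ) = ℓ := by
  rintro ⟨p, b⟩; simp [linv]

lemma linv_ne : ∀ ℓ, linv G Δ ℓ ≠ ℓ := by
  rintro ⟨p, b⟩ h
  simp only [linv, Prod.mk.injEq] at h
  exact (Bool.not_ne_self b) h.2

abbrev Γt : Type := Equiv.Perm (Ball (linv G Δ) N)

noncomputable def sig : Lt G Δ → Γt G Δ N := perm N (linv_invol G Δ) (linv_ne G Δ)

lemma sig_linv (ℓ : Lt G Δ) : sig G Δ N (linv G Δ ℓ) = (sig G Δ N ℓ)⁻¹ :=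
  (perm_inv_eq N (linv_invol G Δ) (linv_ne G Δ) ℓ).symm

abbrev WT : Type := V × Γt G Δ N × Bool

/-- the regular high-girth supergraph -/
noncomputable def HH : SimpleGraph (WT G Δ N) where
  Adj A B := (A.2 = B.2 ∧ G.Adj A.1 B.1) ∨
    (∃ ℓ : Lt G Δ, A.1 = ℓ.1.1 ∧ B.1 = ℓ.1.1 ∧ ℓ.2 = !A.2.2 ∧ B.2.2 = !A.2.2 ∧
      B.2.1 = sig G Δ N ℓ * A.2.1)
  symm := by
    constructor
    rintro A B (⟨h1, h2⟩ | ⟨ℓ, h1, h2, h3, h4, h5⟩)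
    · exact Or.inl ⟨h1.symm, h2.symm⟩
    · refine Or.inr ⟨linv G Δ ℓ, h2, h1, ?_, ?_, ?_⟩
      · show (ℓ.1, !ℓ.2).2 = !B.2.2
        rw [h4]
        simp only [Bool.not_not]
        rw [h3]
        simp
      · rw [h4]; simp
      · rw [sig_linv, h5]; group
  loopless := by
    constructor
    rintro A (⟨h1, h2⟩ | ⟨ℓ, h1, h2, h3, h4, h5⟩)
    · exact G.loopless.irrefl A.1 h2
    · exact (Bool.self_ne_not A.2.2) h4

/-- crossing predicate with letter -/
def CrossP (A B : WT G Δ N) (ℓ : Lt G Δ) : Prop :=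
  A.1 = ℓ.1.1 ∧ B.1 = ℓ.1.1 ∧ ℓ.2 = !A.2.2 ∧ B.2.2 = !A.2.2 ∧ B.2.1 = sig G Δ N ℓ * A.2.1

def WithinP (A B : WT G Δ N) : Prop := A.2 = B.2 ∧ G.Adj A.1 B.1

lemma adj_class {A B : WT G Δ N} (h : (HH G Δ N).Adj A B) :
    WithinP G Δ N A B ∨ ∃ ℓ, CrossP G Δ N A B ℓ := h

lemma reads_exists {A B : WT G Δ N} (w : (HH G Δ N).Walk A B) :
    ∃ u, Reads (HH G Δ N) (CrossP G Δ N) (WithinP G Δ N) w u := by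
  induction w with
  | nil => exact ⟨[], .nil⟩
  | cons h w ih =>
    obtain ⟨u, hu⟩ := ih
    rcases adj_class G Δ N h with hw | ⟨ℓ, hc⟩
    · exact ⟨u, .within h hw hu⟩
    · exact ⟨ℓ :: u, .cross h hc hu⟩

/-- product of the letters of a word, in traversal order -/
noncomputable def Pw (u : List (Lt G Δ)) : Γt G Δ N := ((u.map (sig G Δ N)).reverse).prod

lemma Pw_nil : Pw G Δ N [] = 1 := rfl

lemma Pw_cons (ℓ : Lt G Δ) (u : List (Lt G Δ)) :
    Pw G Δ N (ℓ :: u) = Pw G Δ N u * sig G Δ N ℓ := by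
  unfold Pw
  rw [List.map_cons, List.reverse_cons, List.prod_append]
  simp

lemma reads_facts {A Z : WT G Δ N} {w : (HH G Δ N).Walk A Z} {u : List (Lt G Δ)}
    (hr : Reads (HH G Δ N) (CrossP G Δ N) (WithinP G Δ N) w u) (hp : w.IsPath) :
    Red (linv G Δ) u ∧ Z.2.1 = Pw G Δ N u * A.2.1 ∧ u.length ≤ w.length ∧
    (∀ ℓ u', u = ℓ :: u' →
      s((ℓ.1.1, A.2.1, A.2.2), (ℓ.1.1, sig G Δ N ℓ * A.2.1, !A.2.2)) ∈ w.edges) := by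
  induction hr with
  | nil =>
    refine ⟨List.isChain_nil, by rw [Pw_nil, one_mul], by simp, ?_⟩
    intro ℓ u' h; simp at h
  | @within a b c h w' u' hw hr ih =>
    have hp' : w'.IsPath := ((SimpleGraph.Walk.cons_isPath_iff h w').1 hp).1
    obtain ⟨ih1, ih2, ih3, ih4⟩ := ih hp'
    refine ⟨ih1, ?_, ?_, ?_⟩
    · rw [ih2, hw.1]
    · rw [SimpleGraph.Walk.length_cons]; omega
    · intro ℓ u'' hu
      have := ih4 ℓ u'' hu
      rw [SimpleGraph.Walk.edges_cons]
      rw [hw.1]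
      exact List.mem_cons_of_mem _ this
  | @cross a b c h w' u' ℓ₀ hc hr ih =>
    have hp' : w'.IsPath := ((SimpleGraph.Walk.cons_isPath_iff h w').1 hp).1
    have hans : a ∉ w'.support := ((SimpleGraph.Walk.cons_isPath_iff h w').1 hp).2
    obtain ⟨ih1, ih2, ih3, ih4⟩ := ih hp'
    obtain ⟨hc1, hc2, hc3, hc4, hc5⟩ := hc
    refine ⟨?_, ?_, ?_, ?_⟩
    · -- reducedness
      refine List.isChain_cons.2 ⟨?_, ih1⟩
      intro y hy hyinv
      obtain ⟨u'', hu''⟩ : ∃ u'', u' = y :: u'' := by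
        cases u' with
        | nil => simp at hy
        | cons z t =>
          simp only [List.head?_cons, Option.mem_def, Option.some.injEq] at hy
          exact ⟨t, by rw [hy]⟩
      subst hyinv
      have hedge := ih4 (linv G Δ ℓ₀) u'' hu''
      have e2 : sig G Δ N (linv G Δ ℓ₀) * b.2.1 = a.2.1 := by
        rw [sig_linv, hc5]; group
      have hb : ((linv G Δ ℓ₀).1.1, b.2.1, b.2.2) = b := by
        show (ℓ₀.1.1, b.2.1, b.2.2) = b
        rw [← hc2]
      have ha : ((linv G Δ ℓ₀).1.1, sig G Δ N (linv G Δ ℓ₀) * b.2.1, !b.2.2) = a := by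
        show (ℓ₀.1.1, sig G Δ N (linv G Δ ℓ₀) * b.2.1, !b.2.2) = a
        rw [e2, hc4, ← hc1]
        simp only [Bool.not_not]
      rw [hb, ha] at hedge
      exact hans (w'.snd_mem_support_of_mem_edges hedge)
    · rw [Pw_cons, ih2, hc5, mul_assoc]
    · simp only [List.length_cons, SimpleGraph.Walk.length_cons]; omega
    · intro ℓ u'' hu
      injection hu with h1 h2
      subst h1
      rw [SimpleGraph.Walk.edges_cons]
      have hA : ((ℓ₀.1.1 : V), a.2.1, a.2.2) = a := by rw [← hc1]
      have hB : ((ℓ₀.1.1 : V), sig G Δ N ℓ₀ * a.2.1, !a.2.2) = b := by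
        rw [← hc5, ← hc4, ← hc2]
      rw [hA, hB]
      exact List.mem_cons_self

lemma reads_proj {A Z : WT G Δ N} {w : (HH G Δ N).Walk A Z} {u : List (Lt G Δ)}
    (hr : Reads (HH G Δ N) (CrossP G Δ N) (WithinP G Δ N) w u) (hu : u = []) :
    A.2 = Z.2 ∧ ∃ q : G.Walk A.1 Z.1, q.length = w.length ∧
      w.support = q.support.map (fun v => (v, A.2)) ∧
      w.edges = q.edges.map (Sym2.map (fun v => (v, A.2))) := by
  induction hr with
  | nil =>
    exact ⟨rfl, SimpleGraph.Walk.nil, by simp, by simp, by simp⟩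
  | @within a b c h w' u' hw hr ih =>
    obtain ⟨av, a2⟩ := a
    obtain ⟨bv, b2⟩ := b
    have hab : a2 = b2 := hw.1
    subst hab
    obtain ⟨ih1, q', hq1, hq2, hq3⟩ := ih hu
    refine ⟨ih1, SimpleGraph.Walk.cons hw.2 q', by simp [hq1], ?_, ?_⟩
    · rw [SimpleGraph.Walk.support_cons, SimpleGraph.Walk.support_cons, List.map_cons, hq2]
    · rw [SimpleGraph.Walk.edges_cons, SimpleGraph.Walk.edges_cons, List.map_cons, hq3]
      congr 1
  | @cross a b c h w' u' ℓ₀ hc hr ih => simp at hu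

/-- the canonical equivalence for ports at a vertex -/
def portEquiv (v : V) : {p : Pt G Δ // p.1 = v} ≃ Fin (dfc G Δ v) where
  toFun q := Fin.cast (by rw [q.2]) q.1.2
  invFun i := ⟨⟨v, i⟩, rfl⟩
  left_inv := by rintro ⟨⟨w, i⟩, rfl⟩; rfl
  right_inv := by intro i; rfl

noncomputable def nbrFun (A : WT G Δ N) :
    (G.neighborSet A.1 ⊕ {p : Pt G Δ // p.1 = A.1}) → ((HH G Δ N).neighborSet A) :=
  fun z => match z with
  | Sum.inl w => ⟨(w.1, A.2), Or.inl ⟨rfl, w.2⟩⟩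
  | Sum.inr p => ⟨(p.1.1, sig G Δ N (p.1, !A.2.2) * A.2.1, !A.2.2),
      Or.inr ⟨(p.1, !A.2.2), p.2.symm, rfl, rfl, rfl, rfl⟩⟩

lemma nbrFun_bij (A : WT G Δ N) (hN : 0 < N) : Function.Bijective (nbrFun G Δ N A) := by
  have hperminj : Function.Injective (sig G Δ N) :=
    perm_injective N (linv_invol G Δ) (linv_ne G Δ) hN
  constructor
  · rintro (w1 | p1) (w2 | p2) h
    all_goals have hval := congrArg (fun z => (Subtype.val z : WT G Δ N)) h
    · have := congrArg Prod.fst hval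
      exact congrArg Sum.inl (Subtype.ext this)
    · exact absurd (congrArg (fun z => z.2.2) hval) (Bool.self_ne_not A.2.2)
    · exact absurd (congrArg (fun z => z.2.2) hval).symm (Bool.self_ne_not A.2.2)
    · have h21 : sig G Δ N (p1.1, !A.2.2) * A.2.1 = sig G Δ N (p2.1, !A.2.2) * A.2.1 :=
        congrArg (fun z => z.2.1) hval
      have h2 : sig G Δ N (p1.1, !A.2.2) = sig G Δ N (p2.1, !A.2.2) := mul_right_cancel h21
      have h3 := hperminj h2
      simp only [Prod.mk.injEq] at h3
      exact congrArg Sum.inr (Subtype.ext h3.1)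
  · rintro ⟨B, hB⟩
    rcases hB with ⟨h1, h2⟩ | ⟨ℓ, h1, h2, h3, h4, h5⟩
    · refine ⟨Sum.inl ⟨B.1, h2⟩, Subtype.ext ?_⟩
      show ((B.1 : V), A.2) = B
      rw [h1]
    · refine ⟨Sum.inr ⟨ℓ.1, h1.symm⟩, Subtype.ext ?_⟩
      show ((ℓ.1.1 : V), sig G Δ N (ℓ.1, !A.2.2) * A.2.1, !A.2.2) = B
      have hℓ : ((ℓ.1 : Pt G Δ), !A.2.2) = ℓ := by rw [← h3]
      rw [hℓ, ← h5, ← h4, ← h2]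

lemma HH_card (hdeg : ∀ v, G.degree v ≤ Δ) (hN : 0 < N) (A : WT G Δ N) :
    Nat.card ((HH G Δ N).neighborSet A) = Δ := by
  have e := Equiv.ofBijective _ (nbrFun_bij G Δ N A hN)
  rw [← Nat.card_congr e, Nat.card_sum, Nat.card_congr (portEquiv G Δ A.1),
    Nat.card_eq_fintype_card (α := G.neighborSet A.1), SimpleGraph.card_neighborSet_eq_degree,
    Nat.card_eq_fintype_card, Fintype.card_fin]
  unfold dfc
  have := hdeg A.1
  omega

lemma sig_eq_perm : sig G Δ N = perm N (linv_invol G Δ) (linv_ne G Δ) := rfl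

lemma word_prod_ne_one {u : List (Lt G Δ)} (hred : Red (linv G Δ) u) (hlen : u.length ≤ N)
    (hne : u ≠ []) : Pw G Δ N u ≠ 1 := by
  have hrev : Pw G Δ N u = ((u.reverse.map (sig G Δ N)).prod) := by
    unfold Pw
    rw [List.map_reverse]
  rw [hrev, sig_eq_perm]
  exact perm_word_ne_one N (linv_invol G Δ) (linv_ne G Δ) u.reverse
    (red_reverse (linv_invol G Δ) hred) (by simpa using hlen) (by simpa using hne)

lemma cycle_length (hGg : ∀ ⦃v : V⦄ (q : G.Walk v v), q.IsCycle → N ≤ q.length)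
    {A : WT G Δ N} (c : (HH G Δ N).Walk A A) (hc : c.IsCycle) : N ≤ c.length := by
  by_contra hlt
  push_neg at hlt
  cases c with
  | nil => exact hc.ne_nil rfl
  | @cons _ b _ h p =>
    rw [SimpleGraph.Walk.cons_isCycle_iff] at hc
    obtain ⟨hp, hedge⟩ := hc
    obtain ⟨u, hu⟩ := reads_exists G Δ N p
    obtain ⟨hred, hprod, hlen, hanchor⟩ := reads_facts G Δ N hu hp
    rw [SimpleGraph.Walk.length_cons] at hlt
    rcases adj_class G Δ N h with hw | ⟨ℓ₀, hc0⟩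
    · -- closing edge within a copy
      have hb1 : b.2.1 = A.2.1 := by rw [← hw.1]
      have hP1 : Pw G Δ N u = 1 := by
        apply mul_right_cancel (b := A.2.1)
        rw [one_mul, ← hb1, ← hprod]
        exact hb1.symm
      by_cases hne0 : u = []
      · subst hne0
        obtain ⟨h2eq, q, hq1, hq2, hq3⟩ := reads_proj G Δ N hu rfl
        have hGadj : G.Adj A.1 b.1 := hw.2
        have hqpath : q.IsPath := by
          rw [SimpleGraph.Walk.isPath_def]
          have hnd := hp.support_nodup
          rw [hq2] at hnd
          exact List.Nodup.of_map _ hnd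
        have hqedge : s(A.1, b.1) ∉ q.edges := by
          intro hmem
          apply hedge
          have hmm : Sym2.map (fun v => (v, b.2)) s(A.1, b.1) ∈ p.edges := by
            rw [hq3]; exact List.mem_map_of_mem hmem
          rw [Sym2.map_pair_eq] at hmm
          have hA2 : ((A.1 : V), b.2) = A := by rw [← hw.1]
          have hB2 : ((b.1 : V), b.2) = b := rfl
          rwa [hA2, hB2] at hmm
        have hcyc : (SimpleGraph.Walk.cons hGadj q).IsCycle :=
          (SimpleGraph.Walk.cons_isCycle_iff q hGadj).2 ⟨hqpath, hqedge⟩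
        have hfin := hGg (SimpleGraph.Walk.cons hGadj q) hcyc
        rw [SimpleGraph.Walk.length_cons, hq1] at hfin
        omega
      · exact word_prod_ne_one G Δ N hred (by omega) hne0 hP1
    · -- closing edge crossing
      obtain ⟨hc1, hc2, hc3, hc4, hc5⟩ := hc0
      have hP1 : Pw G Δ N (ℓ₀ :: u) = 1 := by
        apply mul_right_cancel (b := A.2.1)
        rw [one_mul, Pw_cons, mul_assoc, ← hc5, ← hprod]
      have hredfull : Red (linv G Δ) (ℓ₀ :: u) := by
        refine List.isChain_cons.2 ⟨?_, hred⟩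
        intro y hy hyinv
        obtain ⟨u'', hu''⟩ : ∃ u'', u = y :: u'' := by
          cases u with
          | nil => simp at hy
          | cons z t =>
            simp only [List.head?_cons, Option.mem_def, Option.some.injEq] at hy
            exact ⟨t, by rw [hy]⟩
        subst hyinv
        have hedge2 := hanchor (linv G Δ ℓ₀) u'' hu''
        have e2 : sig G Δ N (linv G Δ ℓ₀) * b.2.1 = A.2.1 := by
          rw [sig_linv, hc5]; group
        have hbq : ((linv G Δ ℓ₀).1.1, b.2.1, b.2.2) = b := by
          show (ℓ₀.1.1, b.2.1, b.2.2) = b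
          rw [← hc2]
        have haq : ((linv G Δ ℓ₀).1.1, sig G Δ N (linv G Δ ℓ₀) * b.2.1, !b.2.2) = A := by
          show (ℓ₀.1.1, sig G Δ N (linv G Δ ℓ₀) * b.2.1, !b.2.2) = A
          rw [e2, hc4, ← hc1]
          simp only [Bool.not_not]
        rw [hbq, haq] at hedge2
        exact hedge (by rwa [Sym2.eq_swap] at hedge2)
      exact word_prod_ne_one G Δ N hredfull (by simp only [List.length_cons]; omega)
        (by simp) hP1

noncomputable def inclHom : G →g HH G Δ N where
  toFun v := (v, 1, false)
  map_rel' := fun hab => Or.inl ⟨rfl, hab⟩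

lemma inclHom_inj : Function.Injective (inclHom G Δ N) := by
  intro a b h
  exact congrArg Prod.fst h

end graph
end ES

open SimpleGraph

/-- For all positive integers `Δ` and `g`, every finite simple graph `G` with maximum
degree `Δ` and girth at least `g` is isomorphic to a subgraph of some `Δ`-regular finite
simple graph `H` with girth at least `g`; i.e. there is an injective map `f : V ↪ W`
preserving adjacency. -/
theorem statement3 (Δ g : ℕ) (hΔ : 0 < Δ) (hg : 0 < g) :
    ∀ (V : Type) [Fintype V] [DecidableEq V] (G : SimpleGraph V) [DecidableRel G.Adj],
      G.maxDegree ≤ Δ → (g : ℕ∞) ≤ G.girth →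
        ∃ (W : Type) (_ : Finite W) (H : SimpleGraph W) (f : V ↪ W),
          (∀ v : W, Nat.card (H.neighborSet v) = Δ) ∧
          (g : ℕ∞) ≤ H.girth ∧
          (∀ u v : V, G.Adj u v → H.Adj (f u) (f v)) := by
  intro V _ _ G _ hmax hgirth
  classical
  have hdeg : ∀ v, G.degree v ≤ Δ := fun v => le_trans (G.degree_le_maxDegree v) hmax
  have hgN : g ≤ G.girth := by exact_mod_cast hgirth
  have hGnac : ¬ G.IsAcyclic := by
    intro hA
    rw [hA.girth_eq_zero] at hgN
    omega
  have hcycG : ∀ ⦃v : V⦄ (q : G.Walk v v), q.IsCycle → g ≤ q.length := by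
    intro v q hq
    have h1 : G.egirth ≤ q.length := by
      refine iInf_le_of_le v (iInf_le_of_le q ?_)
      exact iInf_le _ hq
    have h2 : G.girth ≤ q.length := by
      have h3 := ENat.toNat_le_toNat h1 (by simp)
      simpa [SimpleGraph.girth] using h3
    omega
  refine ⟨ES.WT G Δ g, inferInstance, ES.HH G Δ g,
    ⟨fun v => (v, 1, false), fun a b h => congrArg Prod.fst h⟩,
    fun A => ES.HH_card G Δ g hdeg hg A, ?_, fun u v huv => Or.inl ⟨rfl, huv⟩⟩
  -- girth of HH
  have hnac : ¬ (ES.HH G Δ g).IsAcyclic := by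
    obtain ⟨a, q, hq, _⟩ := (SimpleGraph.exists_girth_eq_length).2 hGnac
    intro hA
    exact hA _ (hq.map (ES.inclHom_inj G Δ g))
  have hEg : (g : ℕ∞) ≤ (ES.HH G Δ g).egirth := by
    rw [SimpleGraph.le_egirth]
    intro a w hw
    exact_mod_cast ES.cycle_length G Δ g hcycG w hw
  have hcoe : (((ES.HH G Δ g).girth : ℕ) : ℕ∞) = (ES.HH G Δ g).egirth := by
    refine ENat.coe_toNat ?_
    rw [Ne, SimpleGraph.egirth_eq_top]
    exact hnac
  rw [hcoe]
  exact hEg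
end

section
/- Let ε ∈ (0, 10⁻³]. There exists Δ₀ = Δ₀(ε) such that for every Δ ≥ Δ₀ and every Δ-regular finite simple graph G, there exists a collection {S_v : v ∈ V(G)} of subsets of the colour set {1, …, ⌊(1+ε)Δ⌋} satisfying: (A.1) for every vertex v, |S_v| ≤ 4εΔ/9; (A.2) for every edge e = uv, |S_u ∩ S_v| ≥ ε²Δ/18; and (A.3) for every vertex v and every colour c, the number of neighbours u of v with c ∈ S_u is at most εΔ/2. -/
open SimpleGraph Finset

open Finset

variable {V : Type} [Fintype V] [DecidableEq V] {M : ℕ}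

/-- An event (finset of functions) is determined by coordinates in `W`. -/
def DetBy (A : Finset (V → Fin M)) (W : Finset V) : Prop :=
  ∀ f g : V → Fin M, (∀ u ∈ W, f u = g u) → (f ∈ A → g ∈ A)

lemma indep_lemma (A B : Finset (V → Fin M)) (WA WB : Finset V)
    (hA : DetBy A WA) (hB : DetBy B WB) (hd : Disjoint WA WB) :
    (A ∩ B).card * (univ : Finset (V → Fin M)).card = A.card * B.card := by
  classical
  rw [← Finset.card_product, ← Finset.card_product]
  set mg : (V → Fin M) → (V → Fin M) → (V → Fin M) :=
    fun f g u => if u ∈ WA then f u else g u with hmg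
  have key : ∀ f g u, u ∈ WB → mg f g u = g u := by
    intro f g u hu
    have : u ∉ WA := fun h => (Finset.disjoint_left.mp hd h) hu
    simp [hmg, this]
  have keyA : ∀ f g u, u ∈ WA → mg f g u = f u := by
    intro f g u hu; simp [hmg, hu]
  apply Finset.card_bij' (fun p _ => (mg p.1 p.2, mg p.2 p.1))
    (fun p _ => (mg p.1 p.2, mg p.2 p.1))
  · rintro ⟨h, h'⟩ hm
    rw [Finset.mem_product] at hm
    obtain ⟨hm1, _⟩ := hm
    rw [Finset.mem_inter] at hm1
    rw [Finset.mem_product]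
    constructor
    · exact hA h (mg h h') (fun u hu => (keyA h h' u hu).symm) hm1.1
    · exact hB h (mg h' h) (fun u hu => (key h' h u hu).symm) hm1.2
  · rintro ⟨f, g⟩ hm
    rw [Finset.mem_product] at hm
    rw [Finset.mem_product, Finset.mem_inter]
    refine ⟨⟨hA f (mg f g) (fun u hu => (keyA f g u hu).symm) hm.1,
      hB g (mg f g) (fun u hu => (key f g u hu).symm) hm.2⟩, Finset.mem_univ _⟩
  · rintro ⟨h, h'⟩ _
    simp only [Prod.mk.injEq]
    constructor <;> (funext u; by_cases hu : u ∈ WA <;> simp [hmg, hu])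
  · rintro ⟨h, h'⟩ _
    simp only [Prod.mk.injEq]
    constructor <;> (funext u; by_cases hu : u ∈ WA <;> simp [hmg, hu])

variable {ι : Type} [Fintype ι] [DecidableEq ι]

/-- Intersection of complements of the events indexed by `S`. -/
def Cap (A : ι → Finset (V → Fin M)) (S : Finset ι) : Finset (V → Fin M) :=
  univ \ S.sup A

lemma mem_Cap {A : ι → Finset (V → Fin M)} {S : Finset ι} {f : V → Fin M} :
    f ∈ Cap A S ↔ ∀ j ∈ S, f ∉ A j := by
  simp only [Cap, Finset.mem_sdiff, Finset.mem_univ, true_and, Finset.mem_sup]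
  push_neg; rfl

lemma Cap_insert {A : ι → Finset (V → Fin M)} {S : Finset ι} {j : ι} :
    Cap A (insert j S) = Cap A S \ A j := by
  ext f
  simp only [mem_Cap, Finset.mem_sdiff, mem_Cap, Finset.mem_insert]
  constructor
  · intro h; exact ⟨fun k hk => h k (Or.inr hk), h j (Or.inl rfl)⟩
  · rintro ⟨h1, h2⟩ k (rfl | hk); exact h2; exact h1 k hk

lemma Cap_mono {A : ι → Finset (V → Fin M)} {S S' : Finset ι} (h : S ⊆ S') :
    Cap A S' ⊆ Cap A S := fun f hf => mem_Cap.mpr (fun j hj => mem_Cap.mp hf j (h hj))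

lemma Cap_det {A : ι → Finset (V → Fin M)} {vbl : ι → Finset V}
    (hdet : ∀ i, DetBy (A i) (vbl i)) (S : Finset ι) :
    DetBy (Cap A S) (S.biUnion vbl) := by
  intro f g hagree hf
  rw [mem_Cap] at hf ⊢
  intro j hj hg
  refine hf j hj (hdet j g f (fun u hu => ?_) hg)
  exact (hagree u (Finset.mem_biUnion.mpr ⟨j, hj, hu⟩)).symm

lemma lll_claim (A : ι → Finset (V → Fin M)) (vbl : ι → Finset V)
    (hdet : ∀ i, DetBy (A i) (vbl i))
    (x : ℝ) (hx0 : 0 < x) (hx1 : x < 1) (d : ℕ)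
    (hd : ∀ i, (univ.filter (fun j => ¬ Disjoint (vbl i) (vbl j))).card ≤ d)
    (hp : ∀ i, ((A i).card : ℝ) ≤ x * (1-x)^d * ((univ : Finset (V → Fin M)).card))
    (hM : 0 < M) :
    ∀ n (S : Finset ι) (i : ι), S.card ≤ n →
      ((A i ∩ Cap A S).card : ℝ) ≤ x * (Cap A S).card := by
  classical
  have hΩ : (0:ℝ) < ((univ : Finset (V → Fin M)).card : ℝ) := by
    have : Nonempty (V → Fin M) := ⟨fun _ => ⟨0, hM⟩⟩
    rw [Finset.card_univ]
    exact_mod_cast Fintype.card_pos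
  intro n
  induction n with
  | zero =>
    intro S i hS
    have hSe : S = ∅ := Finset.card_eq_zero.mp (Nat.le_zero.mp hS)
    subst hSe
    have hCap : Cap A (∅ : Finset ι) = univ := by
      ext f; simp [mem_Cap]
    rw [hCap]
    calc ((A i ∩ univ).card : ℝ) ≤ (A i).card := by
          exact_mod_cast Finset.card_le_card (Finset.inter_subset_left)
      _ ≤ x * (1-x)^d * (univ : Finset (V → Fin M)).card := hp i
      _ ≤ x * 1 * (univ : Finset (V → Fin M)).card := by
          apply mul_le_mul_of_nonneg_right _ (le_of_lt hΩ)
          apply mul_le_mul_of_nonneg_left _ (le_of_lt hx0)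
          exact pow_le_one₀ (by linarith) (by linarith)
      _ = x * (univ : Finset (V → Fin M)).card := by ring
  | succ n ih =>
    intro S i hS
    set S₁ := S.filter (fun j => ¬ Disjoint (vbl i) (vbl j)) with hS₁
    set S₂ := S.filter (fun j => Disjoint (vbl i) (vbl j)) with hS₂
    have hunion : S₂ ∪ S₁ = S := by
      rw [hS₁, hS₂]; exact Finset.filter_union_filter_not_eq _ S
    -- peeling
    have aux : ∀ E : Finset ι, E ⊆ S₁ →
        (1-x)^(E.card) * ((Cap A S₂).card : ℝ) ≤ ((Cap A (S₂ ∪ E)).card : ℝ) := by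
      intro E
      induction E using Finset.induction_on with
      | empty => intro _; simp
      | @insert j E hj ihE =>
        intro hsub
        have hjS₁ : j ∈ S₁ := hsub (Finset.mem_insert_self j E)
        have hEsub : E ⊆ S₁ := fun k hk => hsub (Finset.mem_insert_of_mem hk)
        have hrw : S₂ ∪ insert j E = insert j (S₂ ∪ E) := Finset.union_insert _ _ _
        rw [hrw, Cap_insert]
        -- card of (S₂ ∪ E) is small
        have hcard : (S₂ ∪ E).card ≤ n := by
          have h1 : S₂ ∪ E ⊆ S.erase j := by
            intro k hk
            rcases Finset.mem_union.mp hk with hk2 | hkE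
            · refine Finset.mem_erase.mpr ⟨?_, (Finset.filter_subset _ _) hk2⟩
              rintro rfl
              have := (Finset.mem_filter.mp hjS₁).2
              exact this (Finset.mem_filter.mp hk2).2
            · refine Finset.mem_erase.mpr ⟨?_, (Finset.filter_subset _ _) (hEsub hkE)⟩
              rintro rfl; exact hj hkE
          calc (S₂ ∪ E).card ≤ (S.erase j).card := Finset.card_le_card h1
            _ ≤ S.card - 1 := by rw [Finset.card_erase_of_mem (Finset.filter_subset _ _ hjS₁)]
            _ ≤ n := by omega
        have hstep := ih (S₂ ∪ E) j hcard
        have hsub' : Cap A (S₂ ∪ E) ∩ A j ⊆ Cap A (S₂ ∪ E) := Finset.inter_subset_left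
        have h1 : (Cap A (S₂ ∪ E) \ A j).card
            = (Cap A (S₂ ∪ E)).card - (Cap A (S₂ ∪ E) ∩ A j).card := by
          rw [← Finset.sdiff_inter_self_left]
          exact Finset.card_sdiff_of_subset hsub'
        have h1' : ((Cap A (S₂ ∪ E) \ A j).card : ℝ)
            = ((Cap A (S₂ ∪ E)).card : ℝ) - ((Cap A (S₂ ∪ E) ∩ A j).card : ℝ) := by
          rw [h1, Nat.cast_sub (Finset.card_le_card hsub')]
        have h2 : ((Cap A (S₂ ∪ E) ∩ A j).card : ℝ) ≤ x * (Cap A (S₂ ∪ E)).card := by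
          rwa [Finset.inter_comm]
        calc (1-x)^(insert j E).card * ((Cap A S₂).card : ℝ)
            = (1-x) * ((1-x)^(E.card) * ((Cap A S₂).card : ℝ)) := by
              rw [Finset.card_insert_of_notMem hj]; ring
          _ ≤ (1-x) * ((Cap A (S₂ ∪ E)).card : ℝ) := by
              apply mul_le_mul_of_nonneg_left (ihE hEsub) (by linarith)
          _ ≤ ((Cap A (S₂ ∪ E) \ A j).card : ℝ) := by rw [h1']; linarith
    -- main estimate
    have hS₁d : S₁.card ≤ d := by
      refine le_trans (Finset.card_le_card ?_) (hd i)
      intro k hk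
      exact Finset.mem_filter.mpr ⟨Finset.mem_univ _, (Finset.mem_filter.mp hk).2⟩
    have hmono : Cap A S ⊆ Cap A S₂ := Cap_mono (Finset.filter_subset _ _)
    have hint : ((A i ∩ Cap A S).card : ℝ) ≤ ((A i ∩ Cap A S₂).card : ℝ) := by
      exact Nat.cast_le.mpr (Finset.card_le_card (Finset.inter_subset_inter (Finset.Subset.refl _) hmono))
    have hdisj2 : Disjoint (vbl i) (S₂.biUnion vbl) := by
      rw [Finset.disjoint_biUnion_right]
      intro j hj
      exact (Finset.mem_filter.mp hj).2
    have hindep := indep_lemma (A i) (Cap A S₂) (vbl i) (S₂.biUnion vbl)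
      (hdet i) (Cap_det hdet S₂) hdisj2
    have hindep' : ((A i ∩ Cap A S₂).card : ℝ) * ((univ : Finset (V → Fin M)).card : ℝ)
        = ((A i).card : ℝ) * ((Cap A S₂).card : ℝ) := by exact_mod_cast hindep
    have hAiCap : ((A i ∩ Cap A S₂).card : ℝ) ≤ x * (1-x)^d * ((Cap A S₂).card : ℝ) := by
      have h4 : ((A i).card : ℝ) * ((Cap A S₂).card : ℝ)
          ≤ x * (1-x)^d * ((univ : Finset (V → Fin M)).card : ℝ) * ((Cap A S₂).card : ℝ) := by
        apply mul_le_mul_of_nonneg_right (hp i) (by positivity)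
      rw [← mul_le_mul_iff_of_pos_right hΩ]
      calc ((A i ∩ Cap A S₂).card : ℝ) * ((univ : Finset (V → Fin M)).card : ℝ)
          = ((A i).card : ℝ) * ((Cap A S₂).card : ℝ) := hindep'
        _ ≤ x * (1-x)^d * ((univ : Finset (V → Fin M)).card : ℝ) * ((Cap A S₂).card : ℝ) := h4
        _ = x * (1-x)^d * ((Cap A S₂).card : ℝ) * ((univ : Finset (V → Fin M)).card : ℝ) := by ring
    have hpow : (1-x)^d ≤ (1-x)^(S₁.card) :=
      pow_le_pow_of_le_one (by linarith) (by linarith) hS₁d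
    have hCapS : (1-x)^d * ((Cap A S₂).card : ℝ) ≤ ((Cap A S).card : ℝ) := by
      calc (1-x)^d * ((Cap A S₂).card : ℝ)
          ≤ (1-x)^(S₁.card) * ((Cap A S₂).card : ℝ) := by
            apply mul_le_mul_of_nonneg_right hpow (by positivity)
        _ ≤ ((Cap A (S₂ ∪ S₁)).card : ℝ) := aux S₁ (le_refl _)
        _ = ((Cap A S).card : ℝ) := by rw [hunion]
    calc ((A i ∩ Cap A S).card : ℝ) ≤ ((A i ∩ Cap A S₂).card : ℝ) := hint
      _ ≤ x * ((1-x)^d * ((Cap A S₂).card : ℝ)) := by rw [← mul_assoc]; exact hAiCap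
      _ ≤ x * ((Cap A S).card : ℝ) := mul_le_mul_of_nonneg_left hCapS (le_of_lt hx0)

lemma lll (A : ι → Finset (V → Fin M)) (vbl : ι → Finset V)
    (hdet : ∀ i, DetBy (A i) (vbl i))
    (x : ℝ) (hx0 : 0 < x) (hx1 : x < 1) (d : ℕ)
    (hd : ∀ i, (univ.filter (fun j => ¬ Disjoint (vbl i) (vbl j))).card ≤ d)
    (hp : ∀ i, ((A i).card : ℝ) ≤ x * (1-x)^d * ((univ : Finset (V → Fin M)).card))
    (hM : 0 < M) :
    ∃ f : V → Fin M, ∀ i, f ∉ A i := by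
  classical
  have claim := lll_claim A vbl hdet x hx0 hx1 d hd hp hM
  have hΩ : (0:ℝ) < ((univ : Finset (V → Fin M)).card : ℝ) := by
    have : Nonempty (V → Fin M) := ⟨fun _ => ⟨0, hM⟩⟩
    rw [Finset.card_univ]
    exact_mod_cast Fintype.card_pos
  have peel : ∀ S : Finset ι,
      (1-x)^(S.card) * ((univ : Finset (V → Fin M)).card : ℝ) ≤ ((Cap A S).card : ℝ) := by
    intro S
    induction S using Finset.induction_on with
    | empty =>
      have : Cap A (∅ : Finset ι) = univ := by ext f; simp [mem_Cap]
      rw [this]; simp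
    | @insert j E hj ihE =>
      rw [Cap_insert]
      have hsub' : Cap A E ∩ A j ⊆ Cap A E := Finset.inter_subset_left
      have h1' : ((Cap A E \ A j).card : ℝ)
          = ((Cap A E).card : ℝ) - ((Cap A E ∩ A j).card : ℝ) := by
        rw [← Finset.sdiff_inter_self_left, Finset.card_sdiff_of_subset hsub',
          Nat.cast_sub (Finset.card_le_card hsub')]
      have h2 : ((Cap A E ∩ A j).card : ℝ) ≤ x * (Cap A E).card := by
        rw [Finset.inter_comm]; exact claim E.card E j (le_refl _)
      rw [Finset.card_insert_of_notMem hj, h1']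
      calc (1-x)^(E.card + 1) * ((univ : Finset (V → Fin M)).card : ℝ)
          = (1-x) * ((1-x)^(E.card) * ((univ : Finset (V → Fin M)).card : ℝ)) := by ring
        _ ≤ (1-x) * ((Cap A E).card : ℝ) := by
            apply mul_le_mul_of_nonneg_left ihE (by linarith)
        _ ≤ ((Cap A E).card : ℝ) - ((Cap A E ∩ A j).card : ℝ) := by linarith
  have hpos : (0:ℝ) < ((Cap A (univ : Finset ι)).card : ℝ) := by
    calc (0:ℝ) < (1-x)^((univ : Finset ι).card) * ((univ : Finset (V → Fin M)).card : ℝ) := by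
          apply mul_pos (pow_pos (by linarith) _) hΩ
      _ ≤ _ := peel univ
  have : (Cap A (univ : Finset ι)).Nonempty := by
    rw [← Finset.card_pos]; exact_mod_cast hpos
  obtain ⟨f, hf⟩ := this
  exact ⟨f, fun i => mem_Cap.mp hf i (Finset.mem_univ i)⟩

lemma count_bound (W : Finset V) (Bad : Finset (Fin M)) (β : ℝ) (hβ : 1 ≤ β) (T : ℕ) :
    ((univ.filter (fun f : V → Fin M =>
        T + 1 ≤ (W.filter (fun u => f u ∈ Bad)).card)).card : ℝ) * β^(T+1)
      ≤ ((M : ℝ) + (β-1) * Bad.card)^(W.card) * (M:ℝ)^(Fintype.card V - W.card) := by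
  classical
  set g : V → Fin M → ℝ := fun u x => if u ∈ W then (if x ∈ Bad then β else 1) else 1 with hg
  have hβ0 : (0:ℝ) ≤ β := by linarith
  have key : ∀ f : V → Fin M,
      β ^ ((W.filter (fun u => f u ∈ Bad)).card) = ∏ u, g u (f u) := by
    intro f
    have h1 : ∏ u, g u (f u) = ∏ u ∈ W, g u (f u) :=
      (Finset.prod_subset (Finset.subset_univ W) (by intro u _ hu; simp [hg, hu])).symm
    have h2 : ∏ u ∈ W, g u (f u) = ∏ u ∈ W, (if f u ∈ Bad then β else 1) :=
      Finset.prod_congr rfl (by intro u hu; simp [hg, hu])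
    rw [h1, h2, Finset.prod_ite, Finset.prod_const, Finset.prod_const, one_pow, mul_one]
  have sum_eq : ∑ f : V → Fin M, ∏ u, g u (f u)
      = ((M : ℝ) + (β-1) * Bad.card)^(W.card) * (M:ℝ)^(Fintype.card V - W.card) := by
    rw [← Fintype.piFinset_univ, ← Finset.prod_univ_sum]
    have hcol : ∀ u : V, ∑ x : Fin M, g u x
        = if u ∈ W then ((M : ℝ) + (β-1) * Bad.card) else (M:ℝ) := by
      intro u
      by_cases hu : u ∈ W
      · simp only [hg, hu, if_true]
        rw [Finset.sum_ite, Finset.sum_const, Finset.sum_const]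
        have h3 : (univ.filter (fun x : Fin M => x ∈ Bad)) = Bad := by
          ext x; simp
        have h4 : (univ.filter (fun x : Fin M => x ∉ Bad)) = univ \ Bad := by
          ext x; simp
        rw [h3, h4, Finset.card_sdiff_of_subset (Finset.subset_univ _), Finset.card_univ,
          Fintype.card_fin, nsmul_eq_mul, nsmul_eq_mul,
          Nat.cast_sub (by simpa using Finset.card_le_card (Finset.subset_univ Bad))]
        ring
      · simp [hg, hu, Finset.card_univ]
    rw [Finset.prod_congr rfl (fun u _ => hcol u), Finset.prod_ite, Finset.prod_const,
      Finset.prod_const]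
    have hW1 : (univ.filter (fun u => u ∈ W)) = W := by ext u; simp
    have hW2 : (univ.filter (fun u => u ∉ W)).card = Fintype.card V - W.card := by
      rw [Finset.filter_not, Finset.card_sdiff_of_subset (Finset.filter_subset _ _), hW1,
        Finset.card_univ]
    rw [hW1, hW2]
  calc ((univ.filter (fun f : V → Fin M =>
        T + 1 ≤ (W.filter (fun u => f u ∈ Bad)).card)).card : ℝ) * β^(T+1)
      = ∑ _f ∈ (univ.filter (fun f : V → Fin M =>
          T + 1 ≤ (W.filter (fun u => f u ∈ Bad)).card)), β^(T+1) := by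
        rw [Finset.sum_const, nsmul_eq_mul]
    _ ≤ ∑ f ∈ (univ.filter (fun f : V → Fin M =>
          T + 1 ≤ (W.filter (fun u => f u ∈ Bad)).card)),
          β ^ ((W.filter (fun u => f u ∈ Bad)).card) := by
        apply Finset.sum_le_sum
        intro f hf
        exact pow_le_pow_right₀ hβ (Finset.mem_filter.mp hf).2
    _ ≤ ∑ f : V → Fin M, β ^ ((W.filter (fun u => f u ∈ Bad)).card) := by
        apply Finset.sum_le_sum_of_subset_of_nonneg (Finset.filter_subset _ _)
        intro f _ _; positivity
    _ = ∑ f : V → Fin M, ∏ u, g u (f u) := by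
        exact Finset.sum_congr rfl (fun f _ => key f)
    _ = _ := sum_eq

section Geometry

variable (q : ℕ) [Fact q.Prime]

abbrev Pt (q : ℕ) := (ZMod q × ZMod q) ⊕ ZMod q

/-- The "line" with slope `ℓ.1` and intercept `ℓ.2`, together with its point at infinity. -/
def lineSet (ℓ : ZMod q × ZMod q) : Finset (Pt q) :=
  ((univ : Finset (ZMod q)).image (fun x => Sum.inl (x, ℓ.1 * x + ℓ.2))) ∪ {Sum.inr ℓ.1}

lemma mem_lineSet {ℓ : ZMod q × ZMod q} {p : Pt q} :
    p ∈ lineSet q ℓ ↔ (∃ x : ZMod q, p = Sum.inl (x, ℓ.1 * x + ℓ.2)) ∨ p = Sum.inr ℓ.1 := by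
  simp [lineSet, eq_comm]; exact Or.comm

lemma card_lineSet_le (ℓ : ZMod q × ZMod q) : (lineSet q ℓ).card ≤ q + 1 := by
  refine le_trans (Finset.card_union_le _ _) ?_
  have h1 := Finset.card_image_le (s := (univ : Finset (ZMod q)))
    (f := fun x => (Sum.inl (x, ℓ.1 * x + ℓ.2) : Pt q))
  rw [Finset.card_univ, ZMod.card] at h1
  simpa using h1

lemma lines_intersect (ℓ₁ ℓ₂ : ZMod q × ZMod q) :
    ∃ p : Pt q, p ∈ lineSet q ℓ₁ ∧ p ∈ lineSet q ℓ₂ := by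
  by_cases h : ℓ₁.1 = ℓ₂.1
  · exact ⟨Sum.inr ℓ₁.1, (mem_lineSet q).mpr (Or.inr rfl),
      (mem_lineSet q).mpr (Or.inr (by rw [h]))⟩
  · have hne : ℓ₁.1 - ℓ₂.1 ≠ 0 := sub_ne_zero_of_ne h
    set x : ZMod q := (ℓ₂.2 - ℓ₁.2) / (ℓ₁.1 - ℓ₂.1) with hx
    refine ⟨Sum.inl (x, ℓ₁.1 * x + ℓ₁.2), (mem_lineSet q).mpr (Or.inl ⟨x, rfl⟩),
      (mem_lineSet q).mpr (Or.inl ⟨x, ?_⟩)⟩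
    have : ℓ₁.1 * x + ℓ₁.2 = ℓ₂.1 * x + ℓ₂.2 := by
      have h2 : (ℓ₁.1 - ℓ₂.1) * x = ℓ₂.2 - ℓ₁.2 := by
        rw [hx, mul_div_cancel₀ _ hne]
      ring_nf
      ring_nf at h2
      linear_combination h2
    rw [this]

lemma degree_le (p : Pt q) :
    (((univ : Finset (ZMod q × ZMod q))).filter (fun ℓ => p ∈ lineSet q ℓ)).card ≤ q := by
  rcases p with ⟨x, y⟩ | a₀
  · have hsub : ((univ : Finset (ZMod q × ZMod q))).filter (fun ℓ => Sum.inl (x,y) ∈ lineSet q ℓ)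
        ⊆ (univ : Finset (ZMod q)).image (fun a => (a, y - a * x)) := by
      intro ℓ hℓ
      have hm := (mem_lineSet q).mp (Finset.mem_filter.mp hℓ).2
      rcases hm with ⟨x', hx'⟩ | habs
      · rw [Sum.inl.injEq, Prod.mk.injEq] at hx'
        obtain ⟨rfl, hy⟩ := hx'
        refine Finset.mem_image.mpr ⟨ℓ.1, Finset.mem_univ _, ?_⟩
        rw [hy]
        ext <;> simp <;> ring
      · exact absurd habs (by simp)
    calc _ ≤ ((univ : Finset (ZMod q)).image (fun a => (a, y - a * x))).card :=
          Finset.card_le_card hsub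
      _ ≤ (univ : Finset (ZMod q)).card := Finset.card_image_le
      _ = q := by rw [Finset.card_univ, ZMod.card]
  · have hsub : ((univ : Finset (ZMod q × ZMod q))).filter (fun ℓ => Sum.inr a₀ ∈ lineSet q ℓ)
        ⊆ (univ : Finset (ZMod q)).image (fun b => (a₀, b)) := by
      intro ℓ hℓ
      have hm := (mem_lineSet q).mp (Finset.mem_filter.mp hℓ).2
      rcases hm with ⟨x', hx'⟩ | heq
      · exact absurd hx' (by simp)
      · rw [Sum.inr.injEq] at heq
        refine Finset.mem_image.mpr ⟨ℓ.2, Finset.mem_univ _, ?_⟩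
        ext <;> simp [heq]
    calc _ ≤ _ := Finset.card_le_card hsub
      _ ≤ (univ : Finset (ZMod q)).card := Finset.card_image_le
      _ = q := by rw [Finset.card_univ, ZMod.card]

lemma card_Pt : Fintype.card (Pt q) = q^2 + q := by
  simp [Fintype.card_sum, Fintype.card_prod, ZMod.card]; ring

lemma card_lines : Fintype.card (ZMod q × ZMod q) = q^2 := by
  simp [Fintype.card_prod, ZMod.card]; ring

end Geometry

open SimpleGraph

lemma num2 (ε qR sR ΔR : ℝ) (hε0 : 0 < ε) (hε1 : ε ≤ 1/1000) (hq2 : 2 ≤ qR)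
    (hεq : ε*qR ≤ 419/100) (hq2Δ : qR^2*1000 ≤ ΔR) (hs : sR ≤ ε^2*ΔR/18 + 1)
    (hΔ0 : 0 ≤ ΔR) : (qR^2+qR)*sR ≤ ΔR := by
  have hq0 : (0:ℝ) < qR := by linarith
  have p1 : ε^2*qR^2 ≤ (419/100)^2 := by nlinarith [mul_nonneg hε0.le hq0.le]
  have p1Δ : ε^2*qR^2*ΔR ≤ (419/100)^2*ΔR := mul_le_mul_of_nonneg_right p1 hΔ0
  have p2 : ε^2*qR ≤ 419/100000 := by nlinarith [mul_nonneg hε0.le hq0.le]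
  have p2Δ : ε^2*qR*ΔR ≤ (419/100000)*ΔR := mul_le_mul_of_nonneg_right p2 hΔ0
  have p3 : qR ≤ qR^2 := by nlinarith
  have p4 : (qR^2+qR)*sR ≤ (qR^2+qR)*(ε^2*ΔR/18+1) :=
    mul_le_mul_of_nonneg_left hs (by nlinarith)
  nlinarith [p1Δ, p2Δ, p3, p4, hq2Δ]

lemma num3 (ε qR sR ΔR : ℝ) (hε0 : 0 < ε) (hε1 : ε ≤ 1/1000) (hq2 : 2 ≤ qR)
    (hεq : ε*qR ≤ 419/100) (hq1 : qR + 1 ≤ ε^2*ΔR) (hs : sR ≤ ε^2*ΔR/18 + 1)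
    (hE : 0 ≤ ε*ΔR) : (qR+1)*sR ≤ 4*ε*ΔR/9 := by
  have p1 : ε^2*qR*ΔR ≤ (419/100)*(ε*ΔR) := by nlinarith [mul_le_mul_of_nonneg_right hεq hE]
  have p2 : ε^2*ΔR ≤ (1/1000)*(ε*ΔR) := by nlinarith [mul_le_mul_of_nonneg_right hε1 hE]
  have p4 : (qR+1)*sR ≤ (qR+1)*(ε^2*ΔR/18+1) :=
    mul_le_mul_of_nonneg_left hs (by linarith)
  nlinarith [p1, p2, p4, hq1]

set_option maxHeartbeats 4000000 in
/-- Let `ε ∈ (0, 10⁻³]`. There exists `Δ₀ = Δ₀(ε)` such that for every `Δ ≥ Δ₀` and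
every `Δ`-regular finite simple graph `G`, there is a collection `{S v : v ∈ V(G)}` of
subsets of the colour set `{0, …, ⌊(1+ε)Δ⌋ - 1}` satisfying:
(A.1) `|S v| ≤ 4εΔ/9` for every vertex `v`;
(A.2) `|S u ∩ S v| ≥ ε²Δ/18` for every edge `uv`;
(A.3) for every vertex `v` and colour `c`, the number of neighbours `u` of `v` with
`c ∈ S u` is at most `εΔ/2`. -/
theorem statement4 :
    ∀ ε : ℝ, 0 < ε → ε ≤ 1 / 1000 →
      ∃ Δ₀ : ℕ, ∀ Δ : ℕ, Δ₀ ≤ Δ →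
        ∀ (V : Type) [Fintype V] [DecidableEq V] (G : SimpleGraph V) [DecidableRel G.Adj],
          G.IsRegularOfDegree Δ →
            ∃ S : V → Finset ℕ,
              (∀ v : V, S v ⊆ Finset.range ⌊(1 + ε) * (Δ : ℝ)⌋₊) ∧
              (∀ v : V, ((S v).card : ℝ) ≤ 4 * ε * Δ / 9) ∧
              (∀ u v : V, G.Adj u v → ε ^ 2 * Δ / 18 ≤ ((S u ∩ S v).card : ℝ)) ∧
              (∀ (v : V) (c : ℕ),
                ((((G.neighborFinset v).filter (fun u => c ∈ S u)).card : ℝ)) ≤ ε * Δ / 2) := by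
  intro ε hε0 hε1
  refine ⟨⌈(10:ℝ)^30 / ε^5⌉₊ + 2, ?_⟩
  intro Δ hΔ0 V _ _ G _ hreg
  classical
  have hΔR : (10:ℝ)^30 / ε^5 ≤ (Δ:ℝ) := by
    refine le_trans (Nat.le_ceil _) ?_
    exact_mod_cast (by omega : ⌈(10:ℝ)^30 / ε^5⌉₊ ≤ Δ)
  have hεinv : (1000:ℝ) ≤ 1/ε := by
    rw [le_div_iff₀ hε0]; linarith
  have hΔpos : (0:ℝ) < (Δ:ℝ) := by
    have : (0:ℝ) < (10:ℝ)^30 / ε^5 := by positivity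
    linarith
  have hE : (10:ℝ)^30 / ε^4 ≤ ε * Δ := by
    have h := mul_le_mul_of_nonneg_left hΔR (le_of_lt hε0)
    calc (10:ℝ)^30/ε^4 = ε * ((10:ℝ)^30/ε^5) := by field_simp
      _ ≤ ε * Δ := h
  have hΔbig : (10:ℝ)^30 ≤ (Δ:ℝ) := by
    have h1 : ε^5 ≤ 1 := by nlinarith [pow_le_one₀ (le_of_lt hε0) (by linarith : ε ≤ 1) (n := 5)]
    have h2 : (10:ℝ)^30 ≤ (10:ℝ)^30/ε^5 := by
      rw [le_div_iff₀ (by positivity)]; nlinarith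
    linarith
  have hE0 : (10:ℝ)^42 ≤ ε * Δ := by
    have : (10:ℝ)^42 ≤ (10:ℝ)^30 / ε^4 := by
      rw [le_div_iff₀ (by positivity)]
      nlinarith [pow_le_pow_left₀ (le_of_lt hε0) hε1 4]
    linarith
  -- choose the prime q
  set m := ⌈(209:ℝ)/(100*ε)⌉₊ with hm
  have hm0 : m ≠ 0 := by
    have : (0:ℝ) < (209:ℝ)/(100*ε) := by positivity
    exact (Nat.ceil_pos.mpr this).ne'
  obtain ⟨q, hqp, hq1, hq2⟩ := Nat.exists_prime_lt_and_le_two_mul m hm0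
  haveI : Fact q.Prime := ⟨hqp⟩
  have hq2le : 2 ≤ q := hqp.two_le
  have hqlo : (209:ℝ)/(100*ε) < (q:ℝ) :=
    lt_of_le_of_lt (Nat.le_ceil _) (by exact_mod_cast hq1)
  have hqhi : (q:ℝ) ≤ 418/(100*ε) + 2 := by
    have h1 : (q:ℝ) ≤ 2 * m := by exact_mod_cast hq2
    have h2 : (m:ℝ) < (209:ℝ)/(100*ε) + 1 := Nat.ceil_lt_add_one (by positivity)
    have h3 : (418:ℝ)/(100*ε) = 2*((209:ℝ)/(100*ε)) := by ring
    linarith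
  have hqpos : (0:ℝ) < (q:ℝ) := by
    have := hq2le; positivity
  -- block size and threshold
  set s := ⌈ε^2 * (Δ:ℝ) / 18⌉₊ with hsdef
  have hs1 : ε^2 * (Δ:ℝ) / 18 ≤ (s:ℝ) := Nat.le_ceil _
  have hs2 : (s:ℝ) < ε^2 * (Δ:ℝ) / 18 + 1 := Nat.ceil_lt_add_one (by positivity)
  have hs0 : 0 < s := Nat.ceil_pos.mpr (by positivity)
  set T := ⌊ε * (Δ:ℝ) / 2⌋₊ with hTdef
  have hT1 : (T:ℝ) ≤ ε * Δ / 2 := Nat.floor_le (by positivity)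
  have hT2 : ε * Δ / 2 < (T:ℝ) + 1 := Nat.lt_floor_add_one _
  -- polynomial versions of the bounds on q
  have hqlo' : (209:ℝ) < 100 * ε * q := by
    rw [div_lt_iff₀ (by positivity)] at hqlo; linarith
  have hqhi' : 100 * ε * (q:ℝ) ≤ 418 + 200 * ε := by
    have := mul_le_mul_of_nonneg_left hqhi (by positivity : (0:ℝ) ≤ 100 * ε)
    calc 100 * ε * (q:ℝ) ≤ 100 * ε * (418/(100*ε) + 2) := this
      _ = 418 + 200 * ε := by field_simp; ring
  have hΔ5 : (10:ℝ)^30 ≤ ε^5 * Δ := by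
    rw [div_le_iff₀ (by positivity)] at hΔR; linarith
  -- the lines, indexed by `Fin (q^2)`
  set eL : (ZMod q × ZMod q) ≃ Fin (q^2) := Fintype.equivFinOfCardEq (card_lines q) with heL
  set lineOf : Fin (q^2) → Finset (Pt q) := fun i => lineSet q (eL.symm i) with hlineOf
  set Bad : Pt q → Finset (Fin (q^2)) :=
    fun p => univ.filter (fun i => p ∈ lineOf i) with hBad
  have hBadcard : ∀ p, (Bad p).card ≤ q := by
    intro p
    refine le_trans (Finset.card_le_card_of_injOn (fun i => eL.symm i) ?_ ?_) (degree_le q p)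
    · intro i hi
      exact Finset.mem_filter.mpr ⟨Finset.mem_univ _, (Finset.mem_filter.mp hi).2⟩
    · intro a _ b _ hab
      exact eL.symm.injective hab
  -- the events and their variable sets
  set Av : V × Pt q → Finset (V → Fin (q^2)) := fun i =>
    univ.filter (fun f => T + 1 ≤ ((G.neighborFinset i.1).filter (fun u => f u ∈ Bad i.2)).card)
    with hAv
  set vbl : V × Pt q → Finset V := fun i => G.neighborFinset i.1 with hvbl
  have hdet : ∀ i, DetBy (Av i) (vbl i) := by
    rintro ⟨v, p⟩ f g hagree hf
    simp only [hAv, Finset.mem_filter, Finset.mem_univ, true_and] at hf ⊢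
    have : (G.neighborFinset v).filter (fun u => g u ∈ Bad p)
        = (G.neighborFinset v).filter (fun u => f u ∈ Bad p) :=
      Finset.filter_congr (fun u hu => by rw [hagree u hu])
    rwa [this]
  have hdeg : ∀ v : V, (G.neighborFinset v).card = Δ := fun v => hreg v
  -- dependency bound
  set d := Δ^2 * (q^2 + q) with hddef
  have hd : ∀ i, ((univ : Finset (V × Pt q)).filter
      (fun j => ¬ Disjoint (vbl i) (vbl j))).card ≤ d := by
    rintro ⟨v, p⟩
    have hsub : (univ : Finset (V × Pt q)).filter (fun j => ¬ Disjoint (vbl (v,p)) (vbl j))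
        ⊆ ((G.neighborFinset v).biUnion (fun u => G.neighborFinset u)) ×ˢ
            (univ : Finset (Pt q)) := by
      rintro ⟨v', p'⟩ hmem
      have hnd := (Finset.mem_filter.mp hmem).2
      obtain ⟨u, hu1, hu2⟩ := Finset.not_disjoint_iff.mp hnd
      refine Finset.mem_product.mpr ⟨Finset.mem_biUnion.mpr ⟨u, hu1, ?_⟩, Finset.mem_univ _⟩
      rw [SimpleGraph.mem_neighborFinset] at hu2 ⊢
      exact hu2.symm
    calc _ ≤ (((G.neighborFinset v).biUnion (fun u => G.neighborFinset u)) ×ˢ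
            (univ : Finset (Pt q))).card := Finset.card_le_card hsub
      _ = ((G.neighborFinset v).biUnion (fun u => G.neighborFinset u)).card
            * Fintype.card (Pt q) := by rw [Finset.card_product, Finset.card_univ]
      _ ≤ (∑ u ∈ G.neighborFinset v, (G.neighborFinset u).card) * Fintype.card (Pt q) := by
          exact Nat.mul_le_mul_right _ (Finset.card_biUnion_le)
      _ ≤ d := by
          rw [Finset.sum_congr rfl (fun u _ => hdeg u), Finset.sum_const, hdeg v, card_Pt,
            smul_eq_mul, hddef]
          ring_nf
          exact le_refl _
  -- positivity facts
  have hΔnat : 2 ≤ Δ := by omega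
  have hdpos : 0 < d := by
    have h1 : 0 < Δ^2 := by positivity
    have h2 : 0 < q^2 + q := by positivity
    exact Nat.mul_pos h1 h2
  have hd1 : (1:ℝ) ≤ (d:ℝ) := by exact_mod_cast hdpos
  set x : ℝ := 1/((d:ℝ)+1) with hxdef
  have hx0 : 0 < x := by positivity
  have hx1 : x < 1 := by
    rw [hxdef, div_lt_one (by positivity)]; linarith
  set β : ℝ := Real.exp (1/25) with hβdef
  have hβpos : 0 < β := Real.exp_pos _
  have hβ1 : 1 ≤ β := Real.one_le_exp (by norm_num)
  have hβub : β ≤ 25/24 := by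
    have h1 : (24/25 : ℝ) ≤ β⁻¹ := by
      rw [hβdef, ← Real.exp_neg]
      linarith [Real.add_one_le_exp (-(1/25 : ℝ))]
    have h2 : β * (24/25) ≤ β * β⁻¹ := mul_le_mul_of_nonneg_left h1 (le_of_lt hβpos)
    rw [mul_inv_cancel₀ (ne_of_gt hβpos)] at h2
    linarith
  -- the key numerical inequality
  have hεq : ε * q ≤ 419/100 := by linarith
  have hqΔ : (q:ℝ) ≤ (Δ:ℝ)/10 := by
    by_contra hcon
    push_neg at hcon
    have h2 : ε * ((Δ:ℝ)/10) < ε * q := mul_lt_mul_of_pos_left hcon hε0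
    have h3 : ε * ((Δ:ℝ)/10) = (ε * Δ)/10 := by ring
    linarith
  have key : Real.exp ((β - 1) * Δ / q) * (Real.exp 1 * ((d:ℝ)+1)) ≤ β ^ (T+1) := by
    have h1 : (β - 1) * Δ / q ≤ 100 * (ε*Δ) / 5016 := by
      have hβ24 : β - 1 ≤ 1/24 := by linarith
      have hΔq : (Δ:ℝ)/q ≤ 100 * (ε*Δ)/209 := by
        rw [div_le_div_iff₀ hqpos (by norm_num)]
        nlinarith
      calc (β-1)*Δ/q ≤ (1/24) * ((Δ:ℝ)/q) := by
            rw [mul_div_assoc]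
            exact mul_le_mul_of_nonneg_right hβ24 (by positivity)
        _ ≤ (1/24) * (100*(ε*Δ)/209) := by linarith
        _ = 100*(ε*Δ)/5016 := by ring
    have hT25 : (ε*Δ)/50 ≤ ((T:ℝ)+1)/25 := by linarith
    set z : ℝ := ((T:ℝ)+1)/25 - ((β - 1) * Δ / q + 1) with hzdef
    have hz : ε * Δ / 20000 ≤ z := by
      rw [hzdef]; nlinarith
    have hz0 : 0 ≤ z := le_trans (by positivity) hz
    have hdΔ : ((d:ℝ)+1) ≤ (Δ:ℝ)^4 := by
      have hdR : (d:ℝ) = (Δ:ℝ)^2 * ((q:ℝ)^2 + q) := by rw [hddef]; push_cast; ring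
      rw [hdR]
      have hq2 : (q:ℝ)^2 ≤ (Δ:ℝ)^2/100 := by nlinarith
      have hq2' : (Δ:ℝ)^2 * ((q:ℝ)^2) ≤ (Δ:ℝ)^4/100 := by nlinarith [sq_nonneg (Δ:ℝ)]
      have hq3 : (Δ:ℝ)^2 * (q:ℝ) ≤ (Δ:ℝ)^3/10 := by nlinarith [sq_nonneg (Δ:ℝ)]
      have h30 : (Δ:ℝ)^3 * 10 ≤ (Δ:ℝ)^4 := by nlinarith [pow_pos hΔpos 3]
      have h31 : (1:ℝ) ≤ (Δ:ℝ)^4/100 := by nlinarith [pow_le_pow_left₀ (by norm_num : (0:ℝ) ≤ 10^30) hΔbig 4]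
      nlinarith
    have hexp5 : Real.exp z = (Real.exp (z/5))^5 := by
      rw [← Real.exp_nat_mul]
      congr 1
      push_cast
      ring
    have h6 : z/5 ≤ Real.exp (z/5) := by linarith [Real.add_one_le_exp (z/5)]
    have h7 : (z/5)^5 ≤ Real.exp z := by
      rw [hexp5]
      exact pow_le_pow_left₀ (by positivity) h6 5
    have h8 : (ε*Δ/100000)^5 ≤ (z/5)^5 := by
      apply pow_le_pow_left₀ (by positivity) (by linarith) 5
    have h9 : (Δ:ℝ)^4 ≤ (ε*Δ/100000)^5 := by
      have he : (ε*Δ/100000)^5 * 10^25 = ε^5 * Δ^5 := by ring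
      nlinarith [pow_pos hΔpos 4, pow_nonneg (le_of_lt hΔpos) 4]
    have hdz : ((d:ℝ)+1) ≤ Real.exp z := by linarith
    have hβpow : β ^ (T+1) = Real.exp ((((T:ℕ):ℝ)+1) * (1/25)) := by
      rw [hβdef, ← Real.exp_nat_mul]
      push_cast; ring_nf
    calc Real.exp ((β - 1) * Δ / q) * (Real.exp 1 * ((d:ℝ)+1))
        = Real.exp ((β - 1) * Δ / q + 1) * ((d:ℝ)+1) := by rw [Real.exp_add]; ring
      _ ≤ Real.exp ((β - 1) * Δ / q + 1) * Real.exp z := by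
          exact mul_le_mul_of_nonneg_left hdz (le_of_lt (Real.exp_pos _))
      _ = Real.exp ((β - 1) * Δ / q + 1 + z) := by rw [← Real.exp_add]
      _ = Real.exp ((((T:ℕ):ℝ)+1) * (1/25)) := by rw [hzdef]; ring_nf
      _ = β ^ (T+1) := hβpow.symm
  have h1x : (0:ℝ) ≤ 1 - x := by linarith
  have hF1 : 1 ≤ x * (1-x)^d * (Real.exp 1 * ((d:ℝ)+1)) := by
    have hdpos' : (0:ℝ) < (d:ℝ) := by exact_mod_cast hdpos
    have h1 : ((d:ℝ)+1)/d ≤ Real.exp (1/(d:ℝ)) := by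
      have ha := Real.add_one_le_exp (1/(d:ℝ))
      have hb : ((d:ℝ)+1)/d = 1/(d:ℝ) + 1 := by field_simp; ring
      linarith
    have h2 : (((d:ℝ)+1)/(d:ℝ))^d ≤ Real.exp 1 := by
      calc (((d:ℝ)+1)/(d:ℝ))^d ≤ (Real.exp (1/(d:ℝ)))^d :=
            pow_le_pow_left₀ (by positivity) h1 d
        _ = Real.exp ((d:ℕ) * (1/(d:ℝ))) := (Real.exp_nat_mul _ _).symm
        _ = Real.exp 1 := by congr 1; field_simp
    have h3 : (1 - x) = (d:ℝ)/((d:ℝ)+1) := by rw [hxdef]; field_simp; ring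
    have h4 : (1-x)^d * (((d:ℝ)+1)/(d:ℝ))^d = 1 := by
      rw [h3, ← mul_pow]
      have : (d:ℝ)/((d:ℝ)+1) * (((d:ℝ)+1)/(d:ℝ)) = 1 := by
        field_simp
      rw [this, one_pow]
    have h5 : x * (1-x)^d * (Real.exp 1 * ((d:ℝ)+1)) = (1-x)^d * Real.exp 1 := by
      rw [hxdef]; field_simp
    rw [h5]
    calc (1:ℝ) = (1-x)^d * (((d:ℝ)+1)/(d:ℝ))^d := h4.symm
      _ ≤ (1-x)^d * Real.exp 1 := mul_le_mul_of_nonneg_left h2 (by positivity)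
  have hMpos : 0 < q^2 := by positivity
  have hp : ∀ i, ((Av i).card : ℝ)
      ≤ x * (1-x)^d * (((univ : Finset (V → Fin (q^2))).card : ℝ)) := by
    rintro ⟨v, p⟩
    set nV := Fintype.card V with hnV
    have hΔnV : Δ ≤ nV := by
      rw [← hdeg v, hnV, ← Finset.card_univ]
      exact Finset.card_le_univ _
    have hcb := count_bound (M := q^2) (G.neighborFinset v) (Bad p) β hβ1 T
    rw [hdeg v] at hcb
    set Q : ℝ := ((q:ℝ))^2 with hQ
    have hQcast : (((q^2 : ℕ)) : ℝ) = Q := by rw [hQ]; push_cast; ring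
    have hQpos : 0 < Q := by positivity
    have hUcard : (((univ : Finset (V → Fin (q^2))).card) : ℝ) = Q ^ nV := by
      rw [Finset.card_univ, Fintype.card_fun, Fintype.card_fin]
      rw [← hQcast]
      push_cast
      ring
    have hb : ((Bad p).card : ℝ) ≤ (q:ℝ) := by exact_mod_cast hBadcard p
    have hbase : (((q^2:ℕ)):ℝ) + (β-1)*(((Bad p).card:ℕ):ℝ) ≤ Q + (β-1)*q := by
      rw [hQcast]
      have h0 := mul_le_mul_of_nonneg_left hb (by linarith : (0:ℝ) ≤ β - 1)
      linarith
    have hbase0 : (0:ℝ) ≤ (((q^2:ℕ)):ℝ) + (β-1)*(((Bad p).card:ℕ):ℝ) := by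
      have h0 : (0:ℝ) ≤ (β-1)*(((Bad p).card:ℕ):ℝ) :=
        mul_nonneg (by linarith) (by positivity)
      have h1 : (0:ℝ) ≤ (((q^2:ℕ)):ℝ) := by positivity
      linarith
    have hstep1 : ((Av (v,p)).card : ℝ) * β^(T+1) ≤ (Q + (β-1)*q)^Δ * Q^(nV-Δ) := by
      refine le_trans hcb ?_
      rw [hQcast]
      exact mul_le_mul_of_nonneg_right
        (pow_le_pow_left₀ (by rwa [hQcast] at hbase0) (by rwa [hQcast] at hbase) Δ)
        (by positivity)
    have hstep2 : (Q + (β-1)*q) ≤ Q * Real.exp ((β-1)/(q:ℝ)) := by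
      have ha : 1 + (β-1)/(q:ℝ) ≤ Real.exp ((β-1)/(q:ℝ)) := by
        linarith [Real.add_one_le_exp ((β-1)/(q:ℝ))]
      have hb2 : Q * (1 + (β-1)/(q:ℝ)) = Q + (β-1)*q := by
        rw [hQ]; field_simp
      linarith [mul_le_mul_of_nonneg_left ha (le_of_lt hQpos), hb2]
    have hstep3 : (Q + (β-1)*q)^Δ ≤ Q^Δ * Real.exp ((β-1)*Δ/(q:ℝ)) := by
      calc (Q + (β-1)*q)^Δ ≤ (Q * Real.exp ((β-1)/(q:ℝ)))^Δ :=
            pow_le_pow_left₀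
              (by have h0 : (0:ℝ) ≤ (β-1)*q := mul_nonneg (by linarith) (by positivity)
                  linarith) hstep2 Δ
        _ = Q^Δ * (Real.exp ((β-1)/(q:ℝ)))^Δ := mul_pow _ _ _
        _ = Q^Δ * Real.exp ((β-1)*Δ/(q:ℝ)) := by
            rw [← Real.exp_nat_mul]
            congr 1
            field_simp
    have hcardA : ((Av (v,p)).card : ℝ) * (β^(T+1) * (Real.exp 1 * ((d:ℝ)+1)))
        ≤ β^(T+1) * Q^nV := by
      have he1 : (0:ℝ) ≤ Real.exp 1 * ((d:ℝ)+1) := by positivity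
      calc ((Av (v,p)).card : ℝ) * (β^(T+1) * (Real.exp 1 * ((d:ℝ)+1)))
          = (((Av (v,p)).card : ℝ) * β^(T+1)) * (Real.exp 1 * ((d:ℝ)+1)) := by ring
        _ ≤ ((Q + (β-1)*q)^Δ * Q^(nV-Δ)) * (Real.exp 1 * ((d:ℝ)+1)) :=
            mul_le_mul_of_nonneg_right hstep1 he1
        _ ≤ ((Q^Δ * Real.exp ((β-1)*Δ/(q:ℝ))) * Q^(nV-Δ)) * (Real.exp 1 * ((d:ℝ)+1)) := by
            have := mul_le_mul_of_nonneg_right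
              (mul_le_mul_of_nonneg_right hstep3 (by positivity : (0:ℝ) ≤ Q^(nV-Δ))) he1
            linarith
        _ = (Q^Δ * Q^(nV-Δ)) * (Real.exp ((β-1)*Δ/(q:ℝ)) * (Real.exp 1 * ((d:ℝ)+1))) := by
            ring
        _ ≤ (Q^Δ * Q^(nV-Δ)) * β^(T+1) :=
            mul_le_mul_of_nonneg_left key (by positivity)
        _ = β^(T+1) * Q^nV := by
            rw [← pow_add, Nat.add_sub_cancel' hΔnV]; ring
    have hcardA2 : ((Av (v,p)).card : ℝ) * (Real.exp 1 * ((d:ℝ)+1)) ≤ Q^nV := by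
      have hβT : (0:ℝ) < β^(T+1) := pow_pos hβpos _
      apply le_of_mul_le_mul_left _ hβT
      calc β^(T+1) * (((Av (v,p)).card : ℝ) * (Real.exp 1 * ((d:ℝ)+1)))
          = ((Av (v,p)).card : ℝ) * (β^(T+1) * (Real.exp 1 * ((d:ℝ)+1))) := by ring
        _ ≤ β^(T+1) * Q^nV := hcardA
    rw [hUcard]
    have hcA0 : (0:ℝ) ≤ ((Av (v,p)).card : ℝ) := by positivity
    calc ((Av (v,p)).card : ℝ)
        ≤ ((Av (v,p)).card : ℝ) * (x*(1-x)^d*(Real.exp 1*((d:ℝ)+1))) :=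
          le_mul_of_one_le_right hcA0 hF1
      _ = (x*(1-x)^d) * (((Av (v,p)).card : ℝ) * (Real.exp 1*((d:ℝ)+1))) := by ring
      _ ≤ (x*(1-x)^d) * Q^nV := by
          apply mul_le_mul_of_nonneg_left hcardA2 (by positivity)
      _ = x*(1-x)^d*Q^nV := by ring
  obtain ⟨f, hf⟩ := lll Av vbl hdet x hx0 hx1 d hd hp hMpos
  have hgood : ∀ (v : V) (p : Pt q),
      ((G.neighborFinset v).filter (fun u => f u ∈ Bad p)).card ≤ T := by
    intro v p
    by_contra hcon
    push_neg at hcon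
    exact hf (v, p) (Finset.mem_filter.mpr ⟨Finset.mem_univ _, hcon⟩)
  -- more numeric facts
  have hε2Δ : (10:ℝ)^36 ≤ ε^2 * Δ := by
    by_contra hcon
    push_neg at hcon
    have h := mul_lt_mul_of_pos_left hcon (pow_pos hε0 3)
    have h2 : ε^3*(10:ℝ)^36 ≤ 10^27 := by
      nlinarith [pow_le_pow_left₀ hε0.le hε1 3]
    have h3 : ε^3*(ε^2*(Δ:ℝ)) = ε^5*Δ := by ring
    nlinarith [hΔ5]
  have hε3Δ : (10:ℝ)^33 ≤ ε^3 * Δ := by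
    by_contra hcon
    push_neg at hcon
    have h := mul_lt_mul_of_pos_left hcon (pow_pos hε0 2)
    have h2 : ε^2*(10:ℝ)^33 ≤ 10^27 := by
      nlinarith [pow_le_pow_left₀ hε0.le hε1 2]
    have h3 : ε^2*(ε^3*(Δ:ℝ)) = ε^5*Δ := by ring
    nlinarith [hΔ5]
  have hq2Δ : (q:ℝ)^2*1000 ≤ (Δ:ℝ) := by
    by_contra hcon
    push_neg at hcon
    have h := mul_lt_mul_of_pos_left hcon (pow_pos hε0 2)
    have h2 : ε^2*((q:ℝ)^2*1000) ≤ 1000*(419/100)^2 := by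
      nlinarith [mul_nonneg hε0.le hqpos.le]
    nlinarith [hε2Δ]
  have hq1Δ : (q:ℝ) + 1 ≤ ε^2 * Δ := by
    by_contra hcon
    push_neg at hcon
    have h := mul_lt_mul_of_pos_left hcon hε0
    have h2 : ε*((q:ℝ)+1) ≤ 419/100 + 1/1000 := by nlinarith
    have h3 : ε*(ε^2*(Δ:ℝ)) = ε^3*Δ := by ring
    nlinarith [hε3Δ]
  have hsle : (s:ℝ) ≤ ε^2*(Δ:ℝ)/18 + 1 := le_of_lt hs2
  have hq2R : (2:ℝ) ≤ (q:ℝ) := by exact_mod_cast hq2le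
  have hεΔ0 : (0:ℝ) ≤ ε*Δ := by positivity
  -- the colour sets
  set ePt : Pt q ≃ Fin (q^2+q) := Fintype.equivFinOfCardEq (card_Pt q) with hePt
  set block : Pt q → Finset ℕ :=
    fun p => (Finset.range s).map ⟨fun i => (ePt p : ℕ) * s + i, fun a b h => Nat.add_left_cancel h⟩
    with hblock
  set S : V → Finset ℕ := fun v => (lineOf (f v)).biUnion block with hS
  have hblockcard : ∀ p, (block p).card = s := by
    intro p; rw [hblock]; simp
  have hblockmem : ∀ p c, c ∈ block p ↔ ∃ i, i < s ∧ (ePt p : ℕ) * s + i = c := by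
    intro p c
    rw [hblock]
    simp [Finset.mem_map, Finset.mem_range, Function.Embedding.coeFn_mk]
    exact Iff.rfl
  have hdiv : ∀ (a i : ℕ), i < s → (a * s + i) / s = a := by
    intro a i hi
    rw [mul_comm, Nat.mul_add_div hs0, Nat.div_eq_of_lt hi, add_zero]
  have hblockdet : ∀ p p' c, c ∈ block p → c ∈ block p' → p = p' := by
    intro p p' c h1 h2
    obtain ⟨i, hi, hie⟩ := (hblockmem p c).mp h1
    obtain ⟨j, hj, hje⟩ := (hblockmem p' c).mp h2
    have hval : (ePt p : ℕ) = (ePt p' : ℕ) := by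
      have e1 := hdiv (ePt p : ℕ) i hi
      have e2 := hdiv (ePt p' : ℕ) j hj
      rw [hie] at e1; rw [hje] at e2; omega
    exact ePt.injective (Fin.ext hval)
  refine ⟨S, ?_, ?_, ?_, ?_⟩
  · -- subsets of the colour range
    intro v c hc
    obtain ⟨p, hpl, hcb⟩ := Finset.mem_biUnion.mp hc
    obtain ⟨i, hi, hie⟩ := (hblockmem p c).mp hcb
    have hplt : ((ePt p : ℕ)) + 1 ≤ q^2 + q := (ePt p).isLt
    have hcs : c < (q^2+q) * s := by
      have h1 : c < ((ePt p : ℕ) + 1) * s := by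
        rw [← hie, add_mul, one_mul]
        omega
      exact lt_of_lt_of_le h1 (Nat.mul_le_mul_right s hplt)
    have hnat : (q^2+q)*s ≤ Δ := by
      have hreal : (((q^2+q)*s : ℕ) : ℝ) ≤ (Δ:ℝ) := by
        push_cast
        exact num2 ε (q:ℝ) (s:ℝ) (Δ:ℝ) hε0 hε1 hq2R hεq hq2Δ hsle hΔpos.le
      exact_mod_cast hreal
    refine Finset.mem_range.mpr (lt_of_lt_of_le hcs (le_trans hnat (Nat.le_floor ?_)))
    push_cast
    nlinarith
  · -- size bound
    intro v
    have h1 : (S v).card ≤ (q+1) * s := by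
      rw [hS]
      refine le_trans (Finset.card_biUnion_le) ?_
      calc ∑ p ∈ lineOf (f v), (block p).card = ∑ p ∈ lineOf (f v), s :=
            Finset.sum_congr rfl (fun p _ => hblockcard p)
        _ = (lineOf (f v)).card * s := by rw [Finset.sum_const, smul_eq_mul]
        _ ≤ (q+1) * s := Nat.mul_le_mul_right _ (card_lineSet_le q _)
    calc ((S v).card : ℝ) ≤ (((q+1)*s : ℕ) : ℝ) := by exact_mod_cast h1
      _ ≤ 4*ε*Δ/9 := by
          push_cast
          exact num3 ε (q:ℝ) (s:ℝ) (Δ:ℝ) hε0 hε1 hq2R hεq hq1Δ hsle hεΔ0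
  · -- intersections along edges
    intro u v huv
    obtain ⟨p, hp1, hp2⟩ := lines_intersect q (eL.symm (f u)) (eL.symm (f v))
    have hsubB : block p ⊆ S u ∩ S v := by
      intro c hc
      refine Finset.mem_inter.mpr ⟨?_, ?_⟩
      · exact Finset.mem_biUnion.mpr ⟨p, hp1, hc⟩
      · exact Finset.mem_biUnion.mpr ⟨p, hp2, hc⟩
    have h2 : s ≤ (S u ∩ S v).card := by
      rw [← hblockcard p]
      exact Finset.card_le_card hsubB
    calc ε^2*Δ/18 ≤ (s:ℝ) := hs1
      _ ≤ ((S u ∩ S v).card : ℝ) := by exact_mod_cast h2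
  · -- colour loads
    intro v c
    by_cases hex : ∃ p : Pt q, c ∈ block p
    · obtain ⟨p₀, hp₀⟩ := hex
      have hsub : (G.neighborFinset v).filter (fun u => c ∈ S u)
          ⊆ (G.neighborFinset v).filter (fun u => f u ∈ Bad p₀) := by
        intro u hu
        rw [Finset.mem_filter] at hu ⊢
        refine ⟨hu.1, ?_⟩
        obtain ⟨p, hpl, hpc⟩ := Finset.mem_biUnion.mp hu.2
        have hpp : p = p₀ := hblockdet p p₀ c hpc hp₀
        subst hpp
        rw [hBad]
        exact Finset.mem_filter.mpr ⟨Finset.mem_univ _, hpl⟩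
      calc (((G.neighborFinset v).filter (fun u => c ∈ S u)).card : ℝ)
          ≤ (((G.neighborFinset v).filter (fun u => f u ∈ Bad p₀)).card : ℝ) := by
            exact_mod_cast Finset.card_le_card hsub
        _ ≤ (T:ℝ) := by exact_mod_cast hgood v p₀
        _ ≤ ε*Δ/2 := hT1
    · have hemp : (G.neighborFinset v).filter (fun u => c ∈ S u) = ∅ := by
        rw [Finset.filter_eq_empty_iff]
        intro u _ hc
        obtain ⟨p, hpl, hpc⟩ := Finset.mem_biUnion.mp hc
        exact hex ⟨p, hpc⟩
      rw [hemp]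
      simp only [Finset.card_empty, Nat.cast_zero]
      positivity
end

section
/- Let ε ∈ (0, 10⁻³] and let Δ be sufficiently large in terms of ε. Set η = (1−e^{−2})². Define L₁ = (1+ε/9)Δ, T₁ = Δ, R₁ = εΔ/2 and, for i ≥ 1, L_{i+1} = η L_i − L_i^{2/3}, T_{i+1} = η T_i + T_i^{2/3}, R_{i+1} = (1−e^{−2}) R_i + R_i^{2/3}; also define L'_{i+1} = η^i L₁, T'_{i+1} = η^i T₁, R'_{i+1} = η^{i/2} R₁ for i ≥ 0. Let i* be the smallest positive integer i such that R_{i+1} < (ε²/18)²·Δ/128. Then for every 1 ≤ i ≤ i*+1: |L_i − L'_i| ≤ (L'_i)^{5/6}, |T_i − T'_i| ≤ (T'_i)^{5/6}, and |R_i − R'_i| ≤ (R'_i)^{5/6}. -/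
lemma mu_mem : (0.86:ℝ) ≤ 1 - Real.exp (-2) ∧ (1:ℝ) - Real.exp (-2) ≤ 0.87 := by
  have h1 := Real.exp_one_gt_d9
  have h2 := Real.exp_one_lt_d9
  have he2 : Real.exp 2 = Real.exp 1 * Real.exp 1 := by
    rw [← Real.exp_add]; norm_num
  have hb1 : (7.38:ℝ) < Real.exp 2 := by rw [he2]; nlinarith
  have hb2 : Real.exp 2 < 7.39 := by rw [he2]; nlinarith
  have hprod : Real.exp (-2) * Real.exp 2 = 1 := by
    rw [← Real.exp_add]; norm_num
  have hpos := Real.exp_pos (-2)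
  constructor <;> nlinarith

set_option maxHeartbeats 1000000 in
lemma step_lemma (m a x s : ℝ) (hml : 1/2 ≤ m) (hmu : m ≤ 7/8)
    (ha : (200:ℝ)^6 ≤ a) (hx : |x - a| ≤ a ^ ((5:ℝ)/6))
    (hs : s = 1 ∨ s = -1) :
    |m * x + s * x ^ ((2:ℝ)/3) - m * a| ≤ (m * a) ^ ((5:ℝ)/6) := by
  have hm0 : (0:ℝ) ≤ m := by linarith
  have hm1 : m ≤ 1 := by linarith
  have ha1 : (1:ℝ) ≤ a := by norm_num at ha; linarith
  have ha0 : (0:ℝ) < a := by linarith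
  have h56 : a ^ ((5:ℝ)/6) ≤ a := by
    calc a ^ ((5:ℝ)/6) ≤ a ^ (1:ℝ) := Real.rpow_le_rpow_of_exponent_le ha1 (by norm_num)
      _ = a := Real.rpow_one a
  obtain ⟨hxl, hxr⟩ := abs_le.mp hx
  have hx0 : 0 ≤ x := by linarith
  have hx2a : x ≤ 2 * a := by linarith
  have h23nn : (0:ℝ) ≤ a ^ ((2:ℝ)/3) := Real.rpow_nonneg ha0.le _
  have hx23 : x ^ ((2:ℝ)/3) ≤ 2 * a ^ ((2:ℝ)/3) := by
    have h1 : x ^ ((2:ℝ)/3) ≤ (2*a) ^ ((2:ℝ)/3) := Real.rpow_le_rpow hx0 hx2a (by norm_num)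
    have h2 : (2*a) ^ ((2:ℝ)/3) = (2:ℝ)^((2:ℝ)/3) * a^((2:ℝ)/3) := Real.mul_rpow (by norm_num) ha0.le
    have h3 : (2:ℝ)^((2:ℝ)/3) ≤ 2 := by
      calc (2:ℝ)^((2:ℝ)/3) ≤ (2:ℝ)^(1:ℝ) := Real.rpow_le_rpow_of_exponent_le (by norm_num) (by norm_num)
        _ = 2 := Real.rpow_one 2
    nlinarith [mul_le_mul_of_nonneg_right h3 h23nn]
  have ha16 : (200:ℝ) ≤ a ^ ((1:ℝ)/6) := by
    have h1 : ((200:ℝ)^(6:ℕ)) ^ ((1:ℝ)/6) ≤ a ^ ((1:ℝ)/6) :=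
      Real.rpow_le_rpow (by positivity) ha (by norm_num)
    have h2 : ((200:ℝ)^(6:ℕ)) ^ ((1:ℝ)/6) = 200 := by
      rw [← Real.rpow_natCast (200:ℝ) 6, ← Real.rpow_mul (by norm_num)]
      norm_num
    linarith [h2 ▸ h1]
  set t : ℝ := m ^ ((1:ℝ)/6) with htdef
  have ht0 : 0 ≤ t := Real.rpow_nonneg hm0 _
  have ht1 : t ≤ 1 := Real.rpow_le_one hm0 hm1 (by norm_num)
  have ht6 : t ^ (6:ℕ) = m := by
    rw [htdef, ← Real.rpow_natCast (m ^ ((1:ℝ)/6)) 6, ← Real.rpow_mul hm0]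
    norm_num
  have ht5 : t ^ (5:ℕ) = m ^ ((5:ℝ)/6) := by
    rw [htdef, ← Real.rpow_natCast (m ^ ((1:ℝ)/6)) 5, ← Real.rpow_mul hm0]
    norm_num
  have p2 : t^2 ≤ 1 := pow_le_one₀ ht0 ht1
  have p3 : t^3 ≤ 1 := pow_le_one₀ ht0 ht1
  have p4 : t^4 ≤ 1 := pow_le_one₀ ht0 ht1
  have p5 : t^5 ≤ 1 := pow_le_one₀ ht0 ht1
  have h1t6 : 1 - t^6 ≤ 6 * (1 - t) := by
    nlinarith [mul_nonneg (sub_nonneg.2 ht1)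
      (show (0:ℝ) ≤ 5 - t - t^2 - t^3 - t^4 - t^5 by nlinarith)]
  have h3 : (1:ℝ)/48 ≤ 1 - t := by
    have : (1:ℝ)/8 ≤ 1 - t^6 := by rw [ht6]; linarith
    linarith
  have h4 : (1:ℝ)/2 ≤ t^5 := by
    have h56' : t^6 ≤ t^5 := pow_le_pow_of_le_one ht0 ht1 (by norm_num)
    have : (1:ℝ)/2 ≤ t^6 := by rw [ht6]; linarith
    linarith
  have hgap : m + 1/96 ≤ t^5 := by
    have hmul := mul_le_mul h4 h3 (by norm_num) (by positivity)
    nlinarith [ht6]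
  -- abs bound
  have habs_s : |s| = 1 := by rcases hs with rfl | rfl <;> norm_num
  have hx23nn : (0:ℝ) ≤ x ^ ((2:ℝ)/3) := Real.rpow_nonneg hx0 _
  have key1 : |m*x + s*x^((2:ℝ)/3) - m*a| ≤ m * |x - a| + x^((2:ℝ)/3) := by
    have heq : m*x + s*x^((2:ℝ)/3) - m*a = m*(x-a) + s*x^((2:ℝ)/3) := by ring
    rw [heq]
    calc |m*(x-a) + s*x^((2:ℝ)/3)| ≤ |m*(x-a)| + |s*x^((2:ℝ)/3)| := abs_add_le _ _
      _ = m * |x-a| + x^((2:ℝ)/3) := by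
          rw [abs_mul, abs_mul, abs_of_nonneg hm0, habs_s, one_mul, abs_of_nonneg hx23nn]
  have hsplit : a^((5:ℝ)/6) = a^((2:ℝ)/3) * a^((1:ℝ)/6) := by
    rw [← Real.rpow_add ha0]; norm_num
  have huv : 2 * a^((2:ℝ)/3) ≤ (1/96) * (a^((2:ℝ)/3) * a^((1:ℝ)/6)) := by
    linarith [mul_le_mul_of_nonneg_left ha16 h23nn]
  have huv0 : 0 ≤ a^((2:ℝ)/3) * a^((1:ℝ)/6) := by positivity
  have hmid : m * a^((5:ℝ)/6) + 2 * a^((2:ℝ)/3) ≤ t^5 * a^((5:ℝ)/6) := by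
    rw [hsplit]
    linarith [mul_le_mul_of_nonneg_right hgap huv0]
  have hfin : (m * a) ^ ((5:ℝ)/6) = t^5 * a^((5:ℝ)/6) := by
    rw [Real.mul_rpow hm0 ha0.le, ht5]
  have hchain : m * |x - a| + x^((2:ℝ)/3) ≤ m * a^((5:ℝ)/6) + 2 * a^((2:ℝ)/3) := by
    have := mul_le_mul_of_nonneg_left hx hm0
    linarith
  rw [hfin]
  linarith

set_option maxHeartbeats 2000000 in
/-- Let `ε ∈ (0, 10⁻³]`, let `Δ` be sufficiently large in terms of `ε`, and set
`η = (1−e⁻²)²`. For the sequences defined by `L 1 = (1+ε/9)Δ`, `T 1 = Δ`, `R 1 = εΔ/2`,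
the recurrences `L (i+1) = η L i − (L i)^(2/3)`, `T (i+1) = η T i + (T i)^(2/3)`,
`R (i+1) = (1−e⁻²) R i + (R i)^(2/3)` for `i ≥ 1`, the comparison sequences
`L' (i+1) = ηⁱ L 1`, `T' (i+1) = ηⁱ T 1`, `R' (i+1) = η^(i/2) R 1` for `i ≥ 0`, and
`i*` the smallest positive integer `i` with `R (i+1) < (ε²/18)²·Δ/128`, one has
`|L i − L' i| ≤ (L' i)^(5/6)`, `|T i − T' i| ≤ (T' i)^(5/6)` and
`|R i − R' i| ≤ (R' i)^(5/6)` for every `1 ≤ i ≤ i*+1`. -/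
theorem statement8 (ε : ℝ) (hε0 : 0 < ε) (hε1 : ε ≤ 1 / 1000) :
    ∃ Δ₀ : ℝ, ∀ Δ : ℝ, Δ₀ ≤ Δ →
      ∀ (L T R L' T' R' : ℕ → ℝ) (istar : ℕ),
        L 1 = (1 + ε / 9) * Δ →
        T 1 = Δ →
        R 1 = ε * Δ / 2 →
        (∀ i : ℕ, 1 ≤ i →
          L (i + 1) = (1 - Real.exp (-2)) ^ 2 * L i - L i ^ ((2 : ℝ) / 3)) →
        (∀ i : ℕ, 1 ≤ i →
          T (i + 1) = (1 - Real.exp (-2)) ^ 2 * T i + T i ^ ((2 : ℝ) / 3)) →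
        (∀ i : ℕ, 1 ≤ i →
          R (i + 1) = (1 - Real.exp (-2)) * R i + R i ^ ((2 : ℝ) / 3)) →
        (∀ i : ℕ, L' (i + 1) = ((1 - Real.exp (-2)) ^ 2) ^ i * L 1) →
        (∀ i : ℕ, T' (i + 1) = ((1 - Real.exp (-2)) ^ 2) ^ i * T 1) →
        (∀ i : ℕ, R' (i + 1) = ((1 - Real.exp (-2)) ^ 2) ^ ((i : ℝ) / 2) * R 1) →
        1 ≤ istar →
        R (istar + 1) < (ε ^ 2 / 18) ^ 2 * Δ / 128 →
        (∀ j : ℕ, 1 ≤ j → R (j + 1) < (ε ^ 2 / 18) ^ 2 * Δ / 128 → istar ≤ j) →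
        ∀ i : ℕ, 1 ≤ i → i ≤ istar + 1 →
          |L i - L' i| ≤ L' i ^ ((5 : ℝ) / 6) ∧
          |T i - T' i| ≤ T' i ^ ((5 : ℝ) / 6) ∧
          |R i - R' i| ≤ R' i ^ ((5 : ℝ) / 6) := by
  obtain ⟨hmul, hmuu⟩ := mu_mem
  set μ : ℝ := 1 - Real.exp (-2) with hμdef
  refine ⟨41472^2 * 10^14 / ε^6 + 1, ?_⟩
  intro Δ hΔ L T R L' T' R' istar hL1 hT1 hR1 recL recT recR hL' hT' hR' histar hRsm hmin
  have hμ0 : (0:ℝ) < μ := by linarith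
  have hη0 : (0:ℝ) < μ^2 := by positivity
  have hηl : (1:ℝ)/2 ≤ μ^2 := by nlinarith
  have hηu : μ^2 ≤ 7/8 := by nlinarith
  have hε6 : (0:ℝ) < ε^6 := by positivity
  have hΔ0p : (0:ℝ) < 41472^2 * 10^14 / ε^6 + 1 := by positivity
  have hΔpos : 0 < Δ := lt_of_lt_of_le hΔ0p hΔ
  have hε1' : ε ≤ 1 := by linarith
  have hbig : (41472:ℝ)^2 * 10^14 ≤ ε^6 * Δ := by
    have h := mul_le_mul_of_nonneg_left hΔ hε6.le
    have heq : ε^6 * (41472^2 * 10^14 / ε^6 + 1) = 41472^2*10^14 + ε^6 := by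
      field_simp
    nlinarith
  -- primed basics
  have hL'1 : L' 1 = L 1 := by simpa using hL' 0
  have hT'1 : T' 1 = T 1 := by simpa using hT' 0
  have hR'1 : R' 1 = R 1 := by
    have := hR' 0
    norm_num at this
    simpa using this
  have hL's : ∀ k:ℕ, L' (k+1+1) = μ^2 * L' (k+1) := by
    intro k; rw [hL' (k+1), hL' k, pow_succ]; ring
  have hT's : ∀ k:ℕ, T' (k+1+1) = μ^2 * T' (k+1) := by
    intro k; rw [hT' (k+1), hT' k, pow_succ]; ring
  have hR's : ∀ k:ℕ, R' (k+1+1) = μ * R' (k+1) := by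
    intro k
    rw [hR' (k+1), hR' k]
    have hexp : ((k+1:ℕ):ℝ)/2 = (1:ℝ)/2 + (k:ℝ)/2 := by push_cast; ring
    rw [hexp, Real.rpow_add hη0]
    have hsqrt : (μ^2) ^ ((1:ℝ)/2) = μ := by
      rw [← Real.rpow_natCast μ 2, ← Real.rpow_mul hμ0.le]
      norm_num
    rw [hsqrt]; ring
  have hL1pos : 0 < L 1 := by
    rw [hL1]; have h : (0:ℝ) < 1 + ε/9 := by linarith
    exact mul_pos h hΔpos
  have hT1pos : 0 < T 1 := hT1 ▸ hΔpos
  have hR1pos : 0 < R 1 := by rw [hR1]; positivity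
  have hL'pos : ∀ k:ℕ, 0 < L' (k+1) := fun k => by
    rw [hL' k]; exact mul_pos (pow_pos hη0 k) hL1pos
  have hT'pos : ∀ k:ℕ, 0 < T' (k+1) := fun k => by
    rw [hT' k]; exact mul_pos (pow_pos hη0 k) hT1pos
  have hR'pos : ∀ k:ℕ, 0 < R' (k+1) := fun k => by
    rw [hR' k]; exact mul_pos (Real.rpow_pos_of_pos hη0 _) hR1pos
  have hε2 : ε^2 ≤ 1 := by nlinarith
  have hε46 : ε^6 * Δ ≤ ε^4 * Δ := by
    nlinarith [mul_nonneg (mul_nonneg (pow_nonneg hε0.le 4) hΔpos.le) (sub_nonneg.2 hε2)]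
  intro i hi1
  induction i, hi1 using Nat.le_induction with
  | base =>
    intro _
    rw [hL'1, hT'1, hR'1]
    refine ⟨?_, ?_, ?_⟩ <;> simp only [sub_self, abs_zero] <;>
      exact Real.rpow_nonneg (by first | exact hL1pos.le | exact hT1pos.le | exact hR1pos.le) _
  | succ i hi ih =>
    intro hile
    have hi_star : i ≤ istar := by omega
    obtain ⟨hPL, hPT, hPR⟩ := ih (by omega)
    obtain ⟨k, rfl⟩ : ∃ k, i = k + 1 := ⟨i - 1, by omega⟩
    have hRKhalf : ε^4*Δ/82944 ≤ R' (k+1) := by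
      rcases Nat.eq_zero_or_pos k with hk0 | hk1
      · subst hk0
        rw [hR'1, hR1]
        have hε3 : ε^3 ≤ 1 := by nlinarith
        nlinarith [mul_pos hε0 hΔpos, mul_le_mul_of_nonneg_right hε3 (mul_pos hε0 hΔpos).le]
      · have hRi : (ε ^ 2 / 18) ^ 2 * Δ / 128 ≤ R (k+1) := by
          by_contra hcc
          push_neg at hcc
          have := hmin k hk1 hcc
          omega
        have hKval : ε^4*Δ/41472 ≤ R (k+1) := by nlinarith [hRi]
        have hK2 : (2:ℝ) ≤ ε^4*Δ/41472 := by linarith [hbig, hε46]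
        by_contra hcon
        push_neg at hcon
        have h0R' : 0 ≤ R' (k+1) := (hR'pos k).le
        have h56 : R' (k+1) ^ ((5:ℝ)/6) ≤ ε^4*Δ/82944 := by
          have h1 : R' (k+1) ^ ((5:ℝ)/6) ≤ (ε^4*Δ/82944) ^ ((5:ℝ)/6) :=
            Real.rpow_le_rpow h0R' hcon.le (by norm_num)
          have h2 : (1:ℝ) ≤ ε^4*Δ/82944 := by linarith
          have h3 : (ε^4*Δ/82944) ^ ((5:ℝ)/6) ≤ (ε^4*Δ/82944) ^ (1:ℝ) :=
            Real.rpow_le_rpow_of_exponent_le h2 (by norm_num)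
          rw [Real.rpow_one] at h3
          linarith
        have habs := abs_le.mp hPR
        linarith [habs.2]
    have hRk := hR' k
    have hp0 : (0:ℝ) < (μ^2) ^ ((k:ℝ)/2) := Real.rpow_pos_of_pos hη0 _
    have hplb : ε^3/41472 ≤ (μ^2) ^ ((k:ℝ)/2) := by
      have h1 : ε^4*Δ/82944 ≤ (μ^2) ^ ((k:ℝ)/2) * (ε*Δ/2) := by
        rw [← hR1, ← hRk]; exact hRKhalf
      nlinarith [mul_pos hε0 hΔpos]
    have hηk : ε^6/41472^2 ≤ (μ^2)^k := by
      have hpp : (μ^2) ^ ((k:ℝ)/2) * (μ^2) ^ ((k:ℝ)/2) = (μ^2)^k := by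
        rw [← Real.rpow_add hη0]
        rw [show (k:ℝ)/2 + (k:ℝ)/2 = ((k:ℕ):ℝ) by push_cast; ring]
        exact Real.rpow_natCast _ k
      have := mul_le_mul hplb hplb (by positivity) hp0.le
      nlinarith
    have hLlow : (200:ℝ)^6 ≤ L' (k+1) := by
      rw [hL' k, hL1]
      have hΔL : Δ ≤ (1+ε/9)*Δ := by nlinarith
      have h1 : ε^6/41472^2 * Δ ≤ (μ^2)^k * ((1+ε/9)*Δ) :=
        mul_le_mul hηk hΔL hΔpos.le (le_trans (by positivity) hηk)
      linarith [hbig, h1]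
    have hTlow : (200:ℝ)^6 ≤ T' (k+1) := by
      rw [hT' k, hT1]
      have h1 : ε^6/41472^2 * Δ ≤ (μ^2)^k * Δ :=
        mul_le_mul_of_nonneg_right hηk hΔpos.le
      linarith [hbig, h1]
    have hRlow : (200:ℝ)^6 ≤ R' (k+1) := by
      linarith [hbig, hε46, hRKhalf]
    refine ⟨?_, ?_, ?_⟩
    · rw [recL (k+1) (by omega), hL's k]
      have h := step_lemma (μ^2) (L' (k+1)) (L (k+1)) (-1) hηl hηu hLlow hPL (Or.inr rfl)
      rw [show μ^2 * L (k+1) + (-1) * L (k+1) ^ ((2:ℝ)/3) - μ^2 * L' (k+1)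
          = μ^2 * L (k+1) - L (k+1) ^ ((2:ℝ)/3) - μ^2 * L' (k+1) from by ring] at h
      exact h
    · rw [recT (k+1) (by omega), hT's k]
      have h := step_lemma (μ^2) (T' (k+1)) (T (k+1)) 1 hηl hηu hTlow hPT (Or.inl rfl)
      rw [one_mul] at h
      exact h
    · rw [recR (k+1) (by omega), hR's k]
      have h := step_lemma μ (R' (k+1)) (R (k+1)) 1 (by linarith) (by linarith) hRlow hPR (Or.inl rfl)
      rw [one_mul] at h
      exact h
end

section
/- Let ε ∈ (0, 10⁻³]. Define L₁ = (1+ε/9)Δ, T₁ = Δ, R₁ = εΔ/2 and, for i ≥ 1, L_{i+1} = (1−e^{−2})² L_i − L_i^{2/3}, T_{i+1} = (1−e^{−2})² T_i + T_i^{2/3}, R_{i+1} = (1−e^{−2}) R_i + R_i^{2/3}, and let i* be the smallest positive integer i such that R_{i+1} < (ε²/18)²·Δ/128. Then for every 1 ≤ i ≤ i*+1 one has L_i/T_i ≤ 1 + ε/9, and for every δ > 0 there exists Δ₀ (depending only on ε and δ) such that for all Δ ≥ Δ₀ and all 1 ≤ i ≤ i*+1, L_i/T_i ≥ 1 + ε/9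 − δ. -/
private lemma exp2_bounds : (7.38:ℝ) < Real.exp 2 ∧ Real.exp 2 < 7.3891 := by
  have h1 := Real.exp_one_lt_d9
  have h2 := Real.exp_one_gt_d9
  have h : Real.exp 2 = Real.exp 1 * Real.exp 1 := by rw [← Real.exp_add]; norm_num
  constructor <;> nlinarith [Real.exp_pos 1]

private lemma expneg2_bounds : (0.1353:ℝ) < Real.exp (-2) ∧ Real.exp (-2) < 0.14 := by
  obtain ⟨h1, h2⟩ := exp2_bounds
  have h := Real.exp_pos 2
  have hinv : Real.exp 2 * Real.exp (-2) = 1 := by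
    rw [← Real.exp_add]; norm_num [Real.exp_zero]
  constructor <;> nlinarith [Real.exp_pos (-2)]

private lemma rpow23_le {a x : ℝ} (ha : 0 < a) (hx : a⁻¹ ^ 3 ≤ x) : x ^ ((2:ℝ)/3) ≤ a * x := by
  have hx0 : 0 < x := lt_of_lt_of_le (by positivity) hx
  have h13 : a⁻¹ ≤ x ^ ((1:ℝ)/3) := by
    have h := Real.rpow_le_rpow (by positivity) hx (by norm_num : (0:ℝ) ≤ 1/3)
    rw [← Real.rpow_natCast a⁻¹ 3, ← Real.rpow_mul (by positivity)] at h
    norm_num at h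
    exact h
  have h1 : 1 ≤ a * x ^ ((1:ℝ)/3) := by
    have := mul_le_mul_of_nonneg_left h13 ha.le
    simpa [mul_inv_cancel₀ ha.ne'] using this
  calc x ^ ((2:ℝ)/3) = x ^ ((2:ℝ)/3) * 1 := by ring
    _ ≤ x ^ ((2:ℝ)/3) * (a * x ^ ((1:ℝ)/3)) :=
        mul_le_mul_of_nonneg_left h1 (Real.rpow_nonneg hx0.le _)
    _ = a * (x ^ ((2:ℝ)/3) * x ^ ((1:ℝ)/3)) := by ring
    _ = a * x := by rw [← Real.rpow_add hx0]; norm_num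

set_option maxHeartbeats 4000000 in
private lemma main_lemma (ε δ : ℝ) (hε0 : 0 < ε) (hε1 : ε ≤ 1 / 1000) (hδ : 0 < δ) :
    ∃ Δ₀ : ℝ, ∀ Δ : ℝ, Δ₀ ≤ Δ →
      ∀ (L T R : ℕ → ℝ) (istar : ℕ),
        L 1 = (1 + ε / 9) * Δ →
        T 1 = Δ →
        R 1 = ε * Δ / 2 →
        (∀ i : ℕ, 1 ≤ i →
          L (i + 1) = (1 - Real.exp (-2)) ^ 2 * L i - L i ^ ((2 : ℝ) / 3)) →
        (∀ i : ℕ, 1 ≤ i →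
          T (i + 1) = (1 - Real.exp (-2)) ^ 2 * T i + T i ^ ((2 : ℝ) / 3)) →
        (∀ i : ℕ, 1 ≤ i →
          R (i + 1) = (1 - Real.exp (-2)) * R i + R i ^ ((2 : ℝ) / 3)) →
        1 ≤ istar →
        R (istar + 1) < (ε ^ 2 / 18) ^ 2 * Δ / 128 →
        (∀ j : ℕ, 1 ≤ j → R (j + 1) < (ε ^ 2 / 18) ^ 2 * Δ / 128 → istar ≤ j) →
        ∀ i : ℕ, 1 ≤ i → i ≤ istar + 1 →
          L i / T i ≤ 1 + ε / 9 ∧ 1 + ε / 9 - δ ≤ L i / T i := by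
  obtain ⟨hc1, hc2⟩ := expneg2_bounds
  -- c bounds
  obtain ⟨c, hc_def⟩ : ∃ c : ℝ, c = 1 - Real.exp (-2) := ⟨_, rfl⟩
  have hcl : (0.86:ℝ) < c := by rw [hc_def]; linarith
  have hcu : c < 0.8647 := by rw [hc_def]; linarith
  have hc0 : (0:ℝ) < c := by linarith
  have hcsqu : c ^ 2 < 0.748 := by nlinarith
  have hcsql : (0.7396:ℝ) < c ^ 2 := by nlinarith
  have hcsq1 : c ^ 2 ≤ 1 := by nlinarith
  have hcsq0 : (0:ℝ) < c ^ 2 := by positivity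
  -- choice of N
  obtain ⟨N₀, hN₀⟩ := exists_pow_lt_of_lt_one
    (show (0:ℝ) < ε ^ 3 / 41472 by positivity) (by norm_num : (0.9:ℝ) < 1)
  obtain ⟨N, hN_def⟩ : ∃ N : ℕ, N = max N₀ 1 := ⟨_, rfl⟩
  have hN1 : 1 ≤ N := hN_def ▸ le_max_right _ _
  have hNr : (1:ℝ) ≤ (N:ℝ) := by exact_mod_cast hN1
  have hN : (0.9:ℝ) ^ N < ε ^ 3 / 41472 :=
    lt_of_le_of_lt (pow_le_pow_of_le_one (by norm_num) (by norm_num)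
      (hN_def ▸ le_max_left _ _)) hN₀
  obtain ⟨q, hq_def⟩ : ∃ q : ℝ, q = (c ^ 2) ^ N := ⟨_, rfl⟩
  have hq0 : 0 < q := by rw [hq_def]; positivity
  have hq1 : q ≤ 1 := hq_def ▸ pow_le_one₀ hcsq0.le hcsq1
  -- the threshold
  refine ⟨max (max 64 (1658921472 / ε ^ 4)) (max ((4 * (N:ℝ) / q) ^ 3) ((4 * (N:ℝ) / (δ * q)) ^ 3)),
    fun Δ hΔ L T R istar hL1 hT1 hR1 hLrec hTrec hRrec histar1 hRstar hmin => ?_⟩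
  simp only [← hc_def] at hLrec hTrec hRrec
  have hΔ64 : (64:ℝ) ≤ Δ := le_trans (le_trans (le_max_left _ _) (le_max_left _ _)) hΔ
  have hΔ0 : (0:ℝ) < Δ := by linarith
  have hΔB : 1658921472 / ε ^ 4 ≤ Δ :=
    le_trans (le_trans (le_max_right _ _) (le_max_left _ _)) hΔ
  have hΔq : (4 * (N:ℝ) / q) ^ 3 ≤ Δ :=
    le_trans (le_trans (le_max_left _ _) (le_max_right _ _)) hΔ
  have hΔqδ : (4 * (N:ℝ) / (δ * q)) ^ 3 ≤ Δ :=
    le_trans (le_trans (le_max_right _ _) (le_max_right _ _)) hΔ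
  -- rpow consequences
  have hΔ23 : Δ ^ ((2:ℝ)/3) ≤ (1/4) * Δ := by
    apply rpow23_le (by norm_num)
    norm_num
    linarith
  have hΔ23nn : 0 ≤ Δ ^ ((2:ℝ)/3) := Real.rpow_nonneg hΔ0.le _
  have h4N : 4 * (N:ℝ) * Δ ^ ((2:ℝ)/3) ≤ q * Δ := by
    have ha : (0:ℝ) < q / (4 * N) := by positivity
    have h := rpow23_le ha (by rwa [inv_div] : (q / (4 * N))⁻¹ ^ 3 ≤ Δ)
    have h4 : (0:ℝ) < 4 * (N:ℝ) := by linarith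
    rw [div_mul_eq_mul_div, le_div_iff₀ h4] at h
    linarith
  have h4Nδ : 4 * (N:ℝ) * Δ ^ ((2:ℝ)/3) ≤ δ * q * Δ := by
    have ha : (0:ℝ) < δ * q / (4 * N) := by positivity
    have h := rpow23_le ha (by rwa [inv_div] : (δ * q / (4 * N))⁻¹ ^ 3 ≤ Δ)
    have h4 : (0:ℝ) < 4 * (N:ℝ) := by linarith
    rw [div_mul_eq_mul_div, le_div_iff₀ h4] at h
    linarith
  -- T bounds
  have hT : ∀ i : ℕ, 1 ≤ i → i ≤ N + 1 →
      (c ^ 2) ^ (i - 1) * Δ ≤ T i ∧ 0 < T i ∧ T i ≤ Δ := by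
    intro i
    induction i with
    | zero => intro h; exact absurd h (by norm_num)
    | succ n ih =>
      intro _ hn1
      rcases Nat.eq_zero_or_pos n with h0 | hpos
      · subst h0
        simp only [hT1, Nat.sub_self, pow_zero, one_mul]
        exact ⟨le_refl _, hΔ0, le_refl _⟩
      · obtain ⟨hlo, hTpos, hhi⟩ := ih hpos (by omega)
        have hrec := hTrec n hpos
        have h23nn : 0 ≤ T n ^ ((2:ℝ)/3) := Real.rpow_nonneg hTpos.le _
        have h23le : T n ^ ((2:ℝ)/3) ≤ Δ ^ ((2:ℝ)/3) :=
          Real.rpow_le_rpow hTpos.le hhi (by norm_num)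
        have hpow : (c ^ 2) ^ (n + 1 - 1) = (c ^ 2) ^ (n - 1) * c ^ 2 := by
          rw [← pow_succ]
          congr 1
          omega
        have hmul := mul_le_mul_of_nonneg_left hlo hcsq0.le
        have hlow : (c ^ 2) ^ (n + 1 - 1) * Δ ≤ T (n + 1) := by
          rw [hrec, hpow]
          linarith
        refine ⟨hlow, lt_of_lt_of_le (by positivity) hlow, ?_⟩
        rw [hrec]
        have hm1 := mul_le_mul_of_nonneg_left hhi hcsq0.le
        have hm2 := mul_le_mul_of_nonneg_right hcsqu.le hΔ0.le
        linarith
  -- R bounds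
  have hR : ∀ i : ℕ, 1 ≤ i →
      0 < R i ∧ R i ≤ max ((0.9:ℝ) ^ (i - 1) * (ε * Δ / 2)) 40000 := by
    intro i
    induction i with
    | zero => intro h; exact absurd h (by norm_num)
    | succ n ih =>
      intro _
      rcases Nat.eq_zero_or_pos n with h0 | hpos
      · subst h0
        simp only [hR1, Nat.sub_self, pow_zero, one_mul]
        exact ⟨by positivity, le_max_left _ _⟩
      · obtain ⟨hRpos, hRle⟩ := ih hpos
        have hrec := hRrec n hpos
        have h23pos : 0 < R n ^ ((2:ℝ)/3) := Real.rpow_pos_of_pos hRpos _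
        have hpos' : 0 < R (n + 1) := by rw [hrec]; positivity
        refine ⟨hpos', ?_⟩
        rcases le_or_gt (R n) 40000 with hsmall | hbig
        · have h23 : R n ^ ((2:ℝ)/3) ≤ (40000:ℝ) ^ ((2:ℝ)/3) :=
            Real.rpow_le_rpow hRpos.le hsmall (by norm_num)
          have h40 : (40000:ℝ) ^ ((2:ℝ)/3) ≤ 0.03 * 40000 := by
            apply rpow23_le (by norm_num)
            norm_num
          refine le_trans ?_ (le_max_right _ _)
          rw [hrec]
          have hm : c * R n ≤ 0.8647 * 40000 :=
            mul_le_mul hcu.le hsmall hRpos.le (by norm_num)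
          linarith
        · have hRbig : R n ≤ (0.9:ℝ) ^ (n - 1) * (ε * Δ / 2) := by
            rcases le_max_iff.mp hRle with h | h
            · exact h
            · linarith
          have h23 : R n ^ ((2:ℝ)/3) ≤ 0.03 * R n := by
            apply rpow23_le (by norm_num)
            norm_num
            linarith
          have hstep : R (n + 1) ≤ 0.9 * R n := by
            rw [hrec]
            have hm := mul_le_mul_of_nonneg_right hcu.le hRpos.le
            linarith
          refine le_trans ?_ (le_max_left _ _)
          have hpow : (0.9:ℝ) ^ (n + 1 - 1) = 0.9 * (0.9:ℝ) ^ (n - 1) := by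
            rw [mul_comm, ← pow_succ]
            congr 1
            omega
          rw [hpow]
          calc R (n + 1) ≤ 0.9 * R n := hstep
            _ ≤ 0.9 * ((0.9:ℝ) ^ (n - 1) * (ε * Δ / 2)) :=
                mul_le_mul_of_nonneg_left hRbig (by norm_num)
            _ = 0.9 * (0.9:ℝ) ^ (n - 1) * (ε * Δ / 2) := by ring
  -- istar ≤ N
  have histarN : istar ≤ N := by
    apply hmin N hN1
    obtain ⟨hRpos, hRle⟩ := hR (N + 1) (by omega)
    have hthr : (ε ^ 2 / 18) ^ 2 * Δ / 128 = ε ^ 4 * Δ / 41472 := by ring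
    rw [hthr]
    apply lt_of_le_of_lt hRle
    apply max_lt
    · have hεΔ : 0 < ε * Δ / 2 := by positivity
      have := mul_lt_mul_of_pos_right hN hεΔ
      simp only [Nat.add_sub_cancel]
      have h0 : (0:ℝ) ≤ ε ^ 4 * Δ := by positivity
      linarith
    · have : 1658921472 ≤ ε ^ 4 * Δ := by
        rw [div_le_iff₀ (by positivity : (0:ℝ) < ε ^ 4)] at hΔB
        linarith [hΔB]
      linarith
  -- L bounds
  have hρ1 : (1:ℝ) ≤ 1 + ε / 9 := by linarith
  have hρ2 : 1 + ε / 9 ≤ 2 := by linarith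
  have hL : ∀ i : ℕ, 1 ≤ i → i ≤ N + 1 →
      (1 + ε / 9) * T i - 4 * ((i : ℝ) - 1) * Δ ^ ((2:ℝ)/3) ≤ L i ∧
        L i ≤ (1 + ε / 9) * T i := by
    intro i
    induction i with
    | zero => intro h; exact absurd h (by norm_num)
    | succ n ih =>
      intro _ hn1
      rcases Nat.eq_zero_or_pos n with h0 | hpos
      · subst h0
        rw [hL1, hT1]
        push_cast
        norm_num
      · have hnN : n ≤ N := by omega
        obtain ⟨hLlo, hLhi⟩ := ih hpos (by omega)
        obtain ⟨hTlo, hTpos, hThi⟩ := hT n hpos (by omega)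
        have hrecL := hLrec n hpos
        have hrecT := hTrec n hpos
        -- L n nonneg
        have hqle : q ≤ (c ^ 2) ^ (n - 1) :=
          hq_def ▸ pow_le_pow_of_le_one hcsq0.le hcsq1 (by omega)
        have hcast : ((n:ℝ) - 1) ≤ (N:ℝ) := by
          have : (n:ℝ) ≤ (N:ℝ) := by exact_mod_cast hnN
          linarith
        have hLn0 : 0 ≤ L n := by
          have h1 : 4 * ((n:ℝ) - 1) * Δ ^ ((2:ℝ)/3) ≤ 4 * (N:ℝ) * Δ ^ ((2:ℝ)/3) :=
            mul_le_mul_of_nonneg_right (by linarith) hΔ23nn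
          have h2 : q * Δ ≤ (c ^ 2) ^ (n - 1) * Δ :=
            mul_le_mul_of_nonneg_right hqle hΔ0.le
          have h3 : 0 ≤ ε / 9 * T n := by positivity
          linarith
        have hLn23nn : 0 ≤ L n ^ ((2:ℝ)/3) := Real.rpow_nonneg hLn0 _
        have hTn23nn : 0 ≤ T n ^ ((2:ℝ)/3) := Real.rpow_nonneg hTpos.le _
        have hTn23le : T n ^ ((2:ℝ)/3) ≤ Δ ^ ((2:ℝ)/3) :=
          Real.rpow_le_rpow hTpos.le hThi (by norm_num)
        -- upper bound
        have hup : L (n + 1) ≤ (1 + ε / 9) * T (n + 1) := by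
          rw [hrecL, hrecT]
          have hm1 := mul_le_mul_of_nonneg_left hLhi hcsq0.le
          have hm2 : 0 ≤ (1 + ε / 9) * T n ^ ((2:ℝ)/3) :=
            mul_nonneg (by linarith) hTn23nn
          linarith only [hm1, hm2, hLn23nn]
        refine ⟨?_, hup⟩
        -- L n ^ (2/3) ≤ 2 * Δ ^ (2/3)
        have hLn2Δ : L n ≤ 2 * Δ := by
          have hm := mul_le_mul_of_nonneg_right hρ2 hTpos.le
          linarith
        have hLn23 : L n ^ ((2:ℝ)/3) ≤ 2 * Δ ^ ((2:ℝ)/3) := by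
          calc L n ^ ((2:ℝ)/3) ≤ (2 * Δ) ^ ((2:ℝ)/3) :=
                Real.rpow_le_rpow hLn0 hLn2Δ (by norm_num)
            _ = 2 ^ ((2:ℝ)/3) * Δ ^ ((2:ℝ)/3) := Real.mul_rpow (by norm_num) hΔ0.le
            _ ≤ 2 * Δ ^ ((2:ℝ)/3) := by
                have h2 : (2:ℝ) ^ ((2:ℝ)/3) ≤ 2 := by
                  calc (2:ℝ) ^ ((2:ℝ)/3) ≤ (2:ℝ) ^ ((1:ℝ)) :=
                    Real.rpow_le_rpow_of_exponent_le (by norm_num) (by norm_num)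
                  _ = 2 := Real.rpow_one 2
                have := mul_le_mul_of_nonneg_right h2 hΔ23nn
                linarith
        have hTn23' : (1 + ε / 9) * T n ^ ((2:ℝ)/3) ≤ 2 * Δ ^ ((2:ℝ)/3) := by
          have hm := mul_le_mul_of_nonneg_right hρ2 hTn23nn
          linarith
        have hcast2 : ((n:ℝ) + 1 - 1) = (n:ℝ) := by ring
        -- lower bound
        rw [hrecL, hrecT]
        push_cast
        have hn1' : (1:ℝ) ≤ (n:ℝ) := by exact_mod_cast hpos
        have hnn : 0 ≤ 4 * ((n:ℝ) - 1) * Δ ^ ((2:ℝ)/3) :=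
          mul_nonneg (by linarith) hΔ23nn
        have hmull := mul_le_mul_of_nonneg_left hLlo hcsq0.le
        have hcd := mul_le_mul_of_nonneg_right hcsq1 hnn
        linarith only [hmull, hcd, hTn23', hLn23]
  -- conclusion
  intro i hi1 hi2
  have hiN : i ≤ N + 1 := by omega
  obtain ⟨hTlo, hTpos, hThi⟩ := hT i hi1 hiN
  obtain ⟨hLlo, hLhi⟩ := hL i hi1 hiN
  constructor
  · rw [div_le_iff₀ hTpos]
    linarith
  · rw [le_div_iff₀ hTpos]
    have hcast : ((i:ℝ) - 1) ≤ (N:ℝ) := by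
      have : (i:ℝ) ≤ (N:ℝ) + 1 := by exact_mod_cast hiN
      linarith
    have ha : 4 * ((i:ℝ) - 1) * Δ ^ ((2:ℝ)/3) ≤ 4 * (N:ℝ) * Δ ^ ((2:ℝ)/3) :=
      mul_le_mul_of_nonneg_right (by linarith) hΔ23nn
    have hqle' : q ≤ (c ^ 2) ^ (i - 1) :=
      hq_def ▸ pow_le_pow_of_le_one hcsq0.le hcsq1 (by omega)
    have hb : δ * (q * Δ) ≤ δ * ((c ^ 2) ^ (i - 1) * Δ) :=
      mul_le_mul_of_nonneg_left (mul_le_mul_of_nonneg_right hqle' hΔ0.le) hδ.le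
    have hc' : δ * ((c ^ 2) ^ (i - 1) * Δ) ≤ δ * T i :=
      mul_le_mul_of_nonneg_left hTlo hδ.le
    linarith

/-- Let `ε ∈ (0, 10⁻³]`. For the sequences defined by `L 1 = (1+ε/9)Δ`, `T 1 = Δ`,
`R 1 = εΔ/2` and, for `i ≥ 1`, `L (i+1) = (1−e⁻²)² L i − (L i)^(2/3)`,
`T (i+1) = (1−e⁻²)² T i + (T i)^(2/3)`, `R (i+1) = (1−e⁻²) R i + (R i)^(2/3)`, with `i*`
the smallest positive integer `i` such that `R (i+1) < (ε²/18)²·Δ/128`: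
for all large `Δ` and all `1 ≤ i ≤ i*+1` one has `L i / T i ≤ 1 + ε/9`, and for every
`δ > 0` there is `Δ₀` (depending only on `ε` and `δ`) such that for all `Δ ≥ Δ₀` and
all `1 ≤ i ≤ i*+1`, `L i / T i ≥ 1 + ε/9 − δ`. -/
theorem statement9 (ε : ℝ) (hε0 : 0 < ε) (hε1 : ε ≤ 1 / 1000) :
    (∃ Δ₀ : ℝ, ∀ Δ : ℝ, Δ₀ ≤ Δ →
      ∀ (L T R : ℕ → ℝ) (istar : ℕ),
        L 1 = (1 + ε / 9) * Δ →
        T 1 = Δ →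
        R 1 = ε * Δ / 2 →
        (∀ i : ℕ, 1 ≤ i →
          L (i + 1) = (1 - Real.exp (-2)) ^ 2 * L i - L i ^ ((2 : ℝ) / 3)) →
        (∀ i : ℕ, 1 ≤ i →
          T (i + 1) = (1 - Real.exp (-2)) ^ 2 * T i + T i ^ ((2 : ℝ) / 3)) →
        (∀ i : ℕ, 1 ≤ i →
          R (i + 1) = (1 - Real.exp (-2)) * R i + R i ^ ((2 : ℝ) / 3)) →
        1 ≤ istar →
        R (istar + 1) < (ε ^ 2 / 18) ^ 2 * Δ / 128 →
        (∀ j : ℕ, 1 ≤ j → R (j + 1) < (ε ^ 2 / 18) ^ 2 * Δ / 128 → istar ≤ j) →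
        ∀ i : ℕ, 1 ≤ i → i ≤ istar + 1 →
          L i / T i ≤ 1 + ε / 9) ∧
    (∀ δ : ℝ, 0 < δ →
      ∃ Δ₀ : ℝ, ∀ Δ : ℝ, Δ₀ ≤ Δ →
        ∀ (L T R : ℕ → ℝ) (istar : ℕ),
          L 1 = (1 + ε / 9) * Δ →
          T 1 = Δ →
          R 1 = ε * Δ / 2 →
          (∀ i : ℕ, 1 ≤ i →
            L (i + 1) = (1 - Real.exp (-2)) ^ 2 * L i - L i ^ ((2 : ℝ) / 3)) →
          (∀ i : ℕ, 1 ≤ i →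
            T (i + 1) = (1 - Real.exp (-2)) ^ 2 * T i + T i ^ ((2 : ℝ) / 3)) →
          (∀ i : ℕ, 1 ≤ i →
            R (i + 1) = (1 - Real.exp (-2)) * R i + R i ^ ((2 : ℝ) / 3)) →
          1 ≤ istar →
          R (istar + 1) < (ε ^ 2 / 18) ^ 2 * Δ / 128 →
          (∀ j : ℕ, 1 ≤ j → R (j + 1) < (ε ^ 2 / 18) ^ 2 * Δ / 128 → istar ≤ j) →
          ∀ i : ℕ, 1 ≤ i → i ≤ istar + 1 →
            1 + ε / 9 - δ ≤ L i / T i) := by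
  constructor
  · obtain ⟨Δ₀, h⟩ := main_lemma ε 1 hε0 hε1 one_pos
    exact ⟨Δ₀, fun Δ hΔ L T R istar h1 h2 h3 h4 h5 h6 h7 h8 h9 i hi1 hi2 =>
      (h Δ hΔ L T R istar h1 h2 h3 h4 h5 h6 h7 h8 h9 i hi1 hi2).1⟩
  · intro δ hδ
    obtain ⟨Δ₀, h⟩ := main_lemma ε δ hε0 hε1 hδ
    exact ⟨Δ₀, fun Δ hΔ L T R istar h1 h2 h3 h4 h5 h6 h7 h8 h9 i hi1 hi2 =>
      (h Δ hΔ L T R istar h1 h2 h3 h4 h5 h6 h7 h8 h9 i hi1 hi2).2⟩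
end

section
/- Let ε ∈ (0, 10⁻³]. Define R₁ = εΔ/2 and R_{i+1} = (1−e^{−2}) R_i + R_i^{2/3} for i ≥ 1, and let i* be the smallest positive integer i such that R_{i+1} < (ε²/18)²·Δ/128. Then there exists an absolute constant c > 0 such that, for all Δ sufficiently large in terms of ε, i* ≤ c·log₂(1/ε); in particular i* depends only on ε and not on Δ. -/
set_option maxHeartbeats 1000000


lemma mystep10 (x : ℝ) (hx : 8 * Real.exp 6 ≤ x) :
    (1 - Real.exp (-2)) * x + x ^ ((2 : ℝ) / 3) ≤ (1 - Real.exp (-2) / 2) * x := by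
  have hB : (0:ℝ) < 8 * Real.exp 6 := by positivity
  have hx0 : 0 < x := lt_of_lt_of_le hB hx
  have key : x ^ ((2 : ℝ) / 3) ≤ Real.exp (-2) / 2 * x := by
    have h1 : x ^ ((2 : ℝ) / 3) = x * x ^ (-(1:ℝ)/3) := by
      rw [show (2:ℝ)/3 = 1 + (-(1:ℝ)/3) by norm_num, Real.rpow_add hx0, Real.rpow_one]
    have hB3 : (8 * Real.exp 6) ^ (-(1:ℝ)/3) = Real.exp (-2) / 2 := by
      have he : 8 * Real.exp 6 = (2 * Real.exp 2) ^ (3:ℕ) := by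
        rw [mul_pow]
        rw [show (Real.exp 2) ^ (3:ℕ) = Real.exp ((3:ℕ) * 2) from (Real.exp_nat_mul 2 3).symm]
        norm_num
      have hpos : (0:ℝ) ≤ 2 * Real.exp 2 := by positivity
      rw [he, ← Real.rpow_natCast (2 * Real.exp 2) 3, ← Real.rpow_mul hpos,
        show ((3:ℕ):ℝ) * (-(1:ℝ)/3) = -1 by push_cast; ring, Real.rpow_neg_one,
        mul_inv, Real.exp_neg]
      ring
    have h2 : x ^ (-(1:ℝ)/3) ≤ Real.exp (-2) / 2 := by
      rw [← hB3]
      exact Real.rpow_le_rpow_of_nonpos hB hx (by norm_num)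
    rw [h1]
    calc x * x ^ (-(1:ℝ)/3) ≤ x * (Real.exp (-2) / 2) :=
          mul_le_mul_of_nonneg_left h2 hx0.le
      _ = Real.exp (-2) / 2 * x := by ring
  linarith

/-- Let `ε ∈ (0, 10⁻³]`, define `R 1 = εΔ/2` and `R (i+1) = (1−e⁻²) R i + (R i)^(2/3)`
for `i ≥ 1`, and let `i*` be the smallest positive integer `i` such that
`R (i+1) < (ε²/18)²·Δ/128`. Then there is an absolute constant `c > 0` such that, for
all `Δ` sufficiently large in terms of `ε`, `i* ≤ c·log₂(1/ε)`; in particular `i*`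
depends only on `ε` and not on `Δ`. -/
theorem statement10 :
    ∃ c : ℝ, 0 < c ∧
      ∀ ε : ℝ, 0 < ε → ε ≤ 1 / 1000 →
        ∃ Δ₀ : ℝ, ∀ Δ : ℝ, Δ₀ ≤ Δ →
          ∀ (R : ℕ → ℝ) (istar : ℕ),
            R 1 = ε * Δ / 2 →
            (∀ i : ℕ, 1 ≤ i →
              R (i + 1) = (1 - Real.exp (-2)) * R i + R i ^ ((2 : ℝ) / 3)) →
            1 ≤ istar →
            R (istar + 1) < (ε ^ 2 / 18) ^ 2 * Δ / 128 →
            (∀ j : ℕ, 1 ≤ j → R (j + 1) < (ε ^ 2 / 18) ^ 2 * Δ / 128 → istar ≤ j) →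
            (istar : ℝ) ≤ c * Real.logb 2 (1 / ε) := by
  refine ⟨81, by norm_num, ?_⟩
  intro ε hε hε3
  refine ⟨41472 * (8 * Real.exp 6) / ε ^ 4, ?_⟩
  intro Δ hΔ R istar hR1 hrec histar hlt hmin
  -- basic facts
  have hexp1_lt : Real.exp 1 < 2.7182818286 := Real.exp_one_lt_d9
  have hexp1_gt : 2.7182818283 < Real.exp 1 := Real.exp_one_gt_d9
  have hexp1_pos : (0:ℝ) < Real.exp 1 := Real.exp_pos 1
  have hexp2_lt : Real.exp 2 < 8 := by
    have h1 : Real.exp 2 = Real.exp 1 ^ 2 := by rw [← Real.exp_nat_mul]; norm_num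
    have h2 : Real.exp 1 ^ 2 ≤ (2.7182818286:ℝ) ^ 2 :=
      pow_le_pow_left₀ hexp1_pos.le hexp1_lt.le 2
    have h3 : (2.7182818286:ℝ) ^ 2 < 8 := by norm_num
    linarith
  have hexp2_pos : (0:ℝ) < Real.exp 2 := Real.exp_pos 2
  have hexpneg2 : Real.exp (-2) = (Real.exp 2)⁻¹ := Real.exp_neg 2
  have hexpneg2_lb : (1:ℝ)/8 < Real.exp (-2) := by
    rw [hexpneg2, lt_inv_comm₀ (by norm_num) hexp2_pos]
    linarith
  have hexpneg2_ub : Real.exp (-2) < 1 := by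
    rw [hexpneg2]
    rw [inv_lt_one_iff₀]
    right
    linarith [Real.add_one_le_exp (2:ℝ)]
  set q : ℝ := 1 - Real.exp (-2) / 2 with hq
  have hq0 : 0 < q := by rw [hq]; linarith
  set T : ℝ := (ε ^ 2 / 18) ^ 2 * Δ / 128 with hT
  have hTeq : T = ε ^ 4 * Δ / 41472 := by rw [hT]; ring
  set B : ℝ := 8 * Real.exp 6 with hB
  have hBpos : 0 < B := by rw [hB]; positivity
  have hΔpos : 0 < Δ := by
    have : 0 < 41472 * B / ε ^ 4 := by positivity
    linarith [hΔ]
  have hTB : B ≤ T := by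
    rw [hTeq]
    have h1 : 41472 * B / ε ^ 4 ≤ Δ := hΔ
    rw [div_le_iff₀ (by positivity)] at h1
    rw [le_div_iff₀ (by norm_num : (0:ℝ) < 41472)]
    nlinarith
  have hR1T : T ≤ R 1 := by
    rw [hTeq, hR1]
    have hε3' : ε ^ 3 ≤ 1 / 1000000000 := by nlinarith
    have h1 : ε ^ 3 * (ε * Δ) ≤ (1/1000000000) * (ε * Δ) :=
      mul_le_mul_of_nonneg_right hε3' (mul_pos hε hΔpos).le
    nlinarith [mul_pos hε hΔpos]
  -- key induction
  have key : ∀ n : ℕ, n + 1 ≤ istar → R (n + 1) ≤ q ^ n * R 1 := by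
    intro n
    induction n with
    | zero => intro _; simp
    | succ n ih =>
      intro hn
      have ih' := ih (by omega)
      have hTRn : T ≤ R (n + 1) := by
        rcases Nat.eq_zero_or_pos n with h0 | h0
        · rw [h0]; exact hR1T
        · by_contra hcon
          push_neg at hcon
          have := hmin n h0 hcon
          omega
      have hBRn : B ≤ R (n + 1) := le_trans hTB hTRn
      have hstep := mystep10 (R (n + 1)) (by rw [hB] at hBRn; exact hBRn)
      have heq := hrec (n + 1) (by omega)
      calc R (n + 1 + 1) = (1 - Real.exp (-2)) * R (n + 1) + R (n + 1) ^ ((2:ℝ)/3) := heq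
        _ ≤ q * R (n + 1) := hstep
        _ ≤ q * (q ^ n * R 1) := mul_le_mul_of_nonneg_left ih' hq0.le
        _ = q ^ (n + 1) * R 1 := by ring
  -- apply at istar - 1
  set k : ℕ := istar - 1 with hk
  have hik : istar = k + 1 := by omega
  have hTk : T ≤ q ^ k * R 1 := by
    have h1 : R (k + 1) ≤ q ^ k * R 1 := key k (by omega)
    have h2 : T ≤ R (k + 1) := by
      rcases Nat.eq_zero_or_pos k with h0 | h0
      · rw [h0]; exact hR1T
      · by_contra hcon
        push_neg at hcon
        have := hmin k h0 hcon
        omega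
    linarith
  -- derive ε³/20736 ≤ q^k
  have hεΔ : 0 < ε * Δ / 2 := by positivity
  have hmain : ε ^ 3 / 20736 ≤ q ^ k := by
    have h2 : ε ^ 3 / 20736 * (ε * Δ / 2) ≤ q ^ k * (ε * Δ / 2) := by
      rw [hR1] at hTk
      rw [hTeq] at hTk
      linarith [hTk, show ε ^ 3 / 20736 * (ε * Δ / 2) = ε ^ 4 * Δ / 41472 from by ring]
    exact le_of_mul_le_mul_right h2 hεΔ
  -- take logs
  have hlhs_pos : (0:ℝ) < ε ^ 3 / 20736 := by positivity
  have hlog1 : Real.log (ε ^ 3 / 20736) ≤ (k : ℝ) * Real.log q := by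
    rw [← Real.log_pow]
    exact Real.log_le_log hlhs_pos hmain
  have hlogq : Real.log q ≤ -(1/16) := by
    have := Real.log_le_sub_one_of_pos hq0
    rw [hq] at this ⊢
    linarith
  set L : ℝ := -Real.log ε with hL
  have hL5 : 5 ≤ L := by
    have h1 : Real.log ε ≤ Real.log (1/1000) := Real.log_le_log hε hε3
    have h2 : Real.log (1/1000) = -Real.log 1000 := by rw [one_div, Real.log_inv]
    have h3 : (5:ℝ) ≤ Real.log 1000 := by
      rw [Real.le_log_iff_exp_le (by norm_num)]
      have he5 : Real.exp 5 = Real.exp 1 ^ 5 := by rw [← Real.exp_nat_mul]; norm_num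
      have h4 : Real.exp 1 ^ 5 ≤ (2.7182818286:ℝ) ^ 5 :=
        pow_le_pow_left₀ hexp1_pos.le hexp1_lt.le 5
      have h5 : (2.7182818286:ℝ) ^ 5 ≤ 1000 := by norm_num
      linarith [he5 ▸ (le_trans h4 h5)]
    rw [hL]; linarith
  have hlog20736 : Real.log 20736 ≤ 10 := by
    rw [Real.log_le_iff_le_exp (by norm_num)]
    have he10 : Real.exp 10 = Real.exp 1 ^ 10 := by rw [← Real.exp_nat_mul]; norm_num
    have h4 : (2.7182818283:ℝ) ^ 10 ≤ Real.exp 1 ^ 10 :=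
      pow_le_pow_left₀ (by norm_num) hexp1_gt.le 10
    have h5 : (20736:ℝ) ≤ (2.7182818283:ℝ) ^ 10 := by norm_num
    rw [he10]; linarith
  have hloglhs : Real.log (ε ^ 3 / 20736) = 3 * Real.log ε - Real.log 20736 := by
    rw [Real.log_div (by positivity) (by norm_num), Real.log_pow]
    push_cast; ring
  have hkle : (k : ℝ) ≤ 80 * L := by
    have h4 : (k : ℝ) * Real.log q ≤ (k : ℝ) * (-(1/16)) :=
      mul_le_mul_of_nonneg_left hlogq (Nat.cast_nonneg k)
    have h5 : 3 * Real.log ε - Real.log 20736 ≤ (k : ℝ) * (-(1/16)) := by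
      rw [hloglhs] at hlog1; linarith
    have h6 : (k : ℝ) / 16 ≤ 10 + 3 * L := by rw [hL]; linarith
    linarith
  -- conclude
  have hlog2 : Real.log 2 ≤ 1 := by
    rw [Real.log_le_iff_le_exp (by norm_num)]
    linarith
  have hlog2pos : 0 < Real.log 2 := Real.log_pos (by norm_num)
  have hlogb : L ≤ Real.logb 2 (1 / ε) := by
    rw [Real.logb, one_div, Real.log_inv, ← hL, le_div_iff₀ hlog2pos]
    nlinarith
  have hcast : (istar : ℝ) = (k : ℝ) + 1 := by rw [hik]; push_cast; ring
  rw [hcast]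
  linarith
end

section
/- (Alternative version of the Weighted Lovász Local Lemma.) Let β > 0 and ν > 0 be constants with β = e^{2·log 2/ν}. Let E₁, …, E_M be events in a probability space such that each E_r is mutually independent of the collection {E₁,…,E_M} \ (𝒟_r ∪ {E_r}) for some set 𝒟_r ⊆ {E₁,…,E_M}. Suppose there exist reals w₁, …, w_M ≥ 1 and h₁, …, h_M such that for each 1 ≤ r ≤ M: (a) P(E_r) ≤ h_r; (b) Σ_{E_s ∈ 𝒟_r} β^{w_s} h_s ≤ w_r/ν; and (c) β^{w_r} h_r ≤ 1/2. Then P(⋂_{r=1}^{M} E_rᶜ) > 0, i.e. with positive probability none of the events E₁, …, E_M occur. -/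
open MeasureTheory ProbabilityTheory Finset

private lemma lll_exp_le_one_sub {y : ℝ} (h0 : 0 ≤ y) (h2 : y ≤ 1/2) :
    Real.exp (-(2 * Real.log 2 * y)) ≤ 1 - y := by
  have hc := convexOn_exp.2 (Set.mem_univ (0:ℝ)) (Set.mem_univ (-Real.log 2))
    (show (0:ℝ) ≤ 1 - 2*y by linarith) (show (0:ℝ) ≤ 2*y by linarith)
    (show (1 - 2*y) + 2*y = 1 by ring)
  simp only [smul_eq_mul, mul_zero, zero_add, Real.exp_zero, mul_one] at hc
  rw [Real.exp_neg, Real.exp_log two_pos] at hc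
  have harg : 2*y*(-Real.log 2) = -(2 * Real.log 2 * y) := by ring
  rw [harg] at hc
  calc Real.exp (-(2 * Real.log 2 * y)) ≤ (1 - 2*y) + 2*y * (2:ℝ)⁻¹ := hc
    _ = 1 - y := by ring

private lemma lll_aux {Ω : Type} [MeasurableSpace Ω] (μ : Measure Ω) [IsProbabilityMeasure μ]
    {M : ℕ} (E : Fin M → Set Ω) (hmeas : ∀ r, MeasurableSet (E r))
    (D : Fin M → Finset (Fin M)) (x : Fin M → ℝ)
    (hx0 : ∀ r, 0 ≤ x r) (hx2 : ∀ r, x r ≤ 1/2)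
    (hind : ∀ (r : Fin M) (S₂ : Finset (Fin M)), (∀ s ∈ S₂, s ≠ r ∧ s ∉ D r) →
      μ (E r ∩ ⋂ s ∈ S₂, (E s)ᶜ) = μ (E r) * μ (⋂ s ∈ S₂, (E s)ᶜ))
    (hkey : ∀ r : Fin M, ∀ S₁ ⊆ D r, (μ (E r)).toReal ≤ x r * ∏ s ∈ S₁, (1 - x s)) :
    0 < μ (⋂ r, (E r)ᶜ) := by
  have hfin : ∀ X : Set Ω, μ X ≠ ⊤ := fun X => measure_ne_top μ X
  have hmono : ∀ {S T : Finset (Fin M)}, S ⊆ T →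
      (⋂ s ∈ T, (E s)ᶜ) ⊆ ⋂ s ∈ S, (E s)ᶜ := by
    intro S T hST ω hω
    simp only [Set.mem_iInter] at hω ⊢
    exact fun s hs => hω s (hST hs)
  have hsplit : ∀ (s : Fin M) (S : Finset (Fin M)),
      (μ (⋂ t ∈ insert s S, (E t)ᶜ)).toReal
        = (μ (⋂ t ∈ S, (E t)ᶜ)).toReal - (μ (E s ∩ ⋂ t ∈ S, (E t)ᶜ)).toReal := by
    intro s S
    have h1 : (⋂ t ∈ insert s S, (E t)ᶜ) = (⋂ t ∈ S, (E t)ᶜ) \ E s := by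
      rw [Finset.set_biInter_insert, Set.diff_eq, Set.inter_comm]
    have h2 : μ ((⋂ t ∈ S, (E t)ᶜ) ∩ E s) + μ ((⋂ t ∈ S, (E t)ᶜ) \ E s)
        = μ (⋂ t ∈ S, (E t)ᶜ) := measure_inter_add_diff _ (hmeas s)
    have h3 := congrArg ENNReal.toReal h2
    rw [ENNReal.toReal_add (hfin _) (hfin _)] at h3
    have h4 : (⋂ t ∈ S, (E t)ᶜ) ∩ E s = E s ∩ ⋂ t ∈ S, (E t)ᶜ := Set.inter_comm _ _
    rw [h4] at h3
    rw [h1]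
    linarith
  have key : ∀ n : ℕ, ∀ S : Finset (Fin M), S.card ≤ n →
      0 < (μ (⋂ s ∈ S, (E s)ᶜ)).toReal ∧
        ∀ r ∉ S, (μ (E r ∩ ⋂ s ∈ S, (E s)ᶜ)).toReal
          ≤ x r * (μ (⋂ s ∈ S, (E s)ᶜ)).toReal := by
    intro n
    induction n with
    | zero =>
      intro S hS
      have hSe : S = ∅ := card_eq_zero.1 (Nat.le_zero.1 hS)
      subst hSe
      have huniv : (⋂ s ∈ (∅ : Finset (Fin M)), (E s)ᶜ) = Set.univ := by simp
      rw [huniv]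
      constructor
      · simp
      · intro r _
        rw [Set.inter_univ]
        have := hkey r ∅ (empty_subset _)
        simpa using this
    | succ n ih =>
      intro S hS
      have bound : ∀ r ∉ S, (μ (E r ∩ ⋂ s ∈ S, (E s)ᶜ)).toReal
          ≤ x r * (μ (⋂ s ∈ S, (E s)ᶜ)).toReal := by
        intro r hr
        set S₁ := S ∩ D r with hS₁def
        set S₂ := S \ D r with hS₂def
        have hunion : S₂ ∪ S₁ = S := sdiff_union_inter S (D r)
        have tel : ∀ T ⊆ S₁, (∏ s ∈ T, (1 - x s)) * (μ (⋂ s ∈ S₂, (E s)ᶜ)).toReal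
            ≤ (μ (⋂ s ∈ S₂ ∪ T, (E s)ᶜ)).toReal := by
          intro T
          induction T using Finset.induction_on with
          | empty => intro _; simp
          | @insert a T ha ihT =>
            intro hsub
            have haS₁ : a ∈ S₁ := hsub (mem_insert_self _ _)
            have haS : a ∈ S := (mem_inter.1 haS₁).1
            have haD : a ∈ D r := (mem_inter.1 haS₁).2
            have hTsub : T ⊆ S₁ := fun y hy => hsub (mem_insert_of_mem hy)
            have hanotin : a ∉ S₂ ∪ T := by
              intro hmem
              rcases mem_union.1 hmem with h' | h'
              · exact (mem_sdiff.1 h').2 haD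
              · exact ha h'
            have hcard : (S₂ ∪ T).card ≤ n := by
              have hsubS : S₂ ∪ T ⊆ S.erase a := by
                intro y hy
                rcases mem_union.1 hy with h' | h'
                · refine mem_erase.2 ⟨?_, (mem_sdiff.1 h').1⟩
                  rintro rfl; exact (mem_sdiff.1 h').2 haD
                · refine mem_erase.2 ⟨?_, (mem_inter.1 (hTsub h')).1⟩
                  rintro rfl; exact ha h'
              have h1 := card_le_card hsubS
              have h2 := card_erase_of_mem haS
              omega
            obtain ⟨hpos', hbnd'⟩ := ih (S₂ ∪ T) hcard
            have step := hbnd' a hanotin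
            have hins : S₂ ∪ insert a T = insert a (S₂ ∪ T) := by rw [Finset.union_insert]
            rw [hins, hsplit a (S₂ ∪ T), prod_insert ha]
            have h1a : (0:ℝ) ≤ 1 - x a := by have := hx2 a; linarith
            have hihT := ihT hTsub
            have hmm := mul_le_mul_of_nonneg_left hihT h1a
            nlinarith [step, hmm]
        have tel₁ := tel S₁ (Finset.Subset.refl _)
        rw [hunion] at tel₁
        have hS₂prop : ∀ s ∈ S₂, s ≠ r ∧ s ∉ D r := by
          intro s hs
          have hs' := mem_sdiff.1 hs
          exact ⟨fun he => hr (he ▸ hs'.1), hs'.2⟩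
        have hprodμ := hind r S₂ hS₂prop
        have hsub2 : (E r ∩ ⋂ s ∈ S, (E s)ᶜ) ⊆ E r ∩ ⋂ s ∈ S₂, (E s)ᶜ :=
          Set.inter_subset_inter_right _ (hmono (sdiff_subset))
        have m1 : (μ (E r ∩ ⋂ s ∈ S, (E s)ᶜ)).toReal
            ≤ (μ (E r ∩ ⋂ s ∈ S₂, (E s)ᶜ)).toReal :=
          ENNReal.toReal_mono (hfin _) (measure_mono hsub2)
        have m2 : (μ (E r ∩ ⋂ s ∈ S₂, (E s)ᶜ)).toReal
            = (μ (E r)).toReal * (μ (⋂ s ∈ S₂, (E s)ᶜ)).toReal := by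
          rw [hprodμ, ENNReal.toReal_mul]
        have m3 := hkey r S₁ inter_subset_right
        have pS₂nn : (0:ℝ) ≤ (μ (⋂ s ∈ S₂, (E s)ᶜ)).toReal := ENNReal.toReal_nonneg
        calc (μ (E r ∩ ⋂ s ∈ S, (E s)ᶜ)).toReal
            ≤ (μ (E r)).toReal * (μ (⋂ s ∈ S₂, (E s)ᶜ)).toReal := m1.trans_eq m2
          _ ≤ (x r * ∏ s ∈ S₁, (1 - x s)) * (μ (⋂ s ∈ S₂, (E s)ᶜ)).toReal :=
              mul_le_mul_of_nonneg_right m3 pS₂nn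
          _ = x r * ((∏ s ∈ S₁, (1 - x s)) * (μ (⋂ s ∈ S₂, (E s)ᶜ)).toReal) := by ring
          _ ≤ x r * (μ (⋂ s ∈ S, (E s)ᶜ)).toReal :=
              mul_le_mul_of_nonneg_left tel₁ (hx0 r)
      refine ⟨?_, bound⟩
      rcases S.eq_empty_or_nonempty with rfl | ⟨a, haS⟩
      · have huniv : (⋂ s ∈ (∅ : Finset (Fin M)), (E s)ᶜ) = Set.univ := by simp
        rw [huniv]; simp
      · have hins : insert a (S.erase a) = S := insert_erase haS
        have hcard : (S.erase a).card ≤ n := by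
          have h2 := card_erase_of_mem haS
          have h3 : 1 ≤ S.card := card_pos.2 ⟨a, haS⟩
          omega
        obtain ⟨hp, hb'⟩ := ih (S.erase a) hcard
        have hbnd := hb' a (notMem_erase _ _)
        rw [← hins, hsplit a (S.erase a)]
        have hxa := hx2 a
        nlinarith [hp, hbnd, mul_le_mul_of_nonneg_right hxa (le_of_lt hp)]
  have hfinal := (key M Finset.univ (by simp)).1
  have huniv : (⋂ s ∈ (Finset.univ : Finset (Fin M)), (E s)ᶜ) = ⋂ r, (E r)ᶜ := by simp
  rw [huniv] at hfinal
  exact (ENNReal.toReal_pos_iff.1 hfinal).1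

/-- Alternative version of the Weighted Lovász Local Lemma. Let `β, ν > 0` with
`β = e^(2·log 2/ν)`. Let `E 1, …, E M` be events in a probability space such that each
`E r` is mutually independent of the collection of events outside `𝒟 r ∪ {E r}`
(formalized as independence of the generated σ-algebras). If there are reals
`w r ≥ 1` and `h r` such that (a) `P(E r) ≤ h r`, (b) `∑_{s ∈ 𝒟 r} β^(w s) h s ≤ w r/ν`
and (c) `β^(w r) h r ≤ 1/2` for every `r`, then with positive probability none of the
events occur. -/
theorem statement11 (Ω : Type) [MeasurableSpace Ω] (μ : Measure Ω) [IsProbabilityMeasure μ]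
    (β ν : ℝ) (hν : 0 < ν) (hβ : β = Real.exp (2 * Real.log 2 / ν))
    (M : ℕ) (E : Fin M → Set Ω) (hmeas : ∀ r, MeasurableSet (E r))
    (D : Fin M → Finset (Fin M))
    (hindep : ∀ r : Fin M,
      Indep (MeasurableSpace.generateFrom {E r})
        (MeasurableSpace.generateFrom (E '' {s : Fin M | s ≠ r ∧ s ∉ D r})) μ)
    (w h : Fin M → ℝ) (hw : ∀ r, 1 ≤ w r)
    (ha : ∀ r, (μ (E r)).toReal ≤ h r)
    (hb : ∀ r, ∑ s ∈ D r, β ^ (w s) * h s ≤ w r / ν)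
    (hc : ∀ r, β ^ (w r) * h r ≤ 1 / 2) :
    0 < μ (⋂ r : Fin M, (E r)ᶜ) := by
  set c : ℝ := 2 * Real.log 2 / ν with hcdef
  have hlog2 : 0 < Real.log 2 := Real.log_pos one_lt_two
  have hcpos : 0 < c := div_pos (by linarith) hν
  have hβw : ∀ t : ℝ, β ^ t = Real.exp (c * t) := by
    intro t
    rw [hβ, ← Real.exp_mul]
  have hh0 : ∀ r, 0 ≤ h r := fun r => le_trans ENNReal.toReal_nonneg (ha r)
  set x : Fin M → ℝ := fun r => β ^ (w r) * h r with hxdef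
  have hx0 : ∀ r, 0 ≤ x r := fun r => mul_nonneg (le_of_lt (by rw [hβw]; exact Real.exp_pos _)) (hh0 r)
  have hx2 : ∀ r, x r ≤ 1/2 := hc
  have hind : ∀ (r : Fin M) (S₂ : Finset (Fin M)), (∀ s ∈ S₂, s ≠ r ∧ s ∉ D r) →
      μ (E r ∩ ⋂ s ∈ S₂, (E s)ᶜ) = μ (E r) * μ (⋂ s ∈ S₂, (E s)ᶜ) := by
    intro r S₂ hprop
    have h1 : MeasurableSet[MeasurableSpace.generateFrom {E r}] (E r) :=
      MeasurableSpace.measurableSet_generateFrom rfl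
    have h2 : MeasurableSet[MeasurableSpace.generateFrom
        (E '' {s : Fin M | s ≠ r ∧ s ∉ D r})] (⋂ s ∈ S₂, (E s)ᶜ) := by
      refine Finset.measurableSet_biInter _ (fun s hs => MeasurableSet.compl ?_)
      exact MeasurableSpace.measurableSet_generateFrom ⟨s, hprop s hs, rfl⟩
    exact ((Indep_iff _ _ _).1 (hindep r)) _ _ h1 h2
  have hkey : ∀ r : Fin M, ∀ S₁ ⊆ D r, (μ (E r)).toReal ≤ x r * ∏ s ∈ S₁, (1 - x s) := by
    intro r S₁ hsub
    have hsum1 : ∑ s ∈ S₁, x s ≤ ∑ s ∈ D r, x s :=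
      Finset.sum_le_sum_of_subset_of_nonneg hsub (fun s _ _ => hx0 s)
    have hsum2 : ∑ s ∈ D r, x s ≤ w r / ν := hb r
    have harg : 2 * Real.log 2 * (∑ s ∈ S₁, x s) ≤ c * w r := by
      have : 2 * Real.log 2 * (w r / ν) = c * w r := by
        rw [hcdef]; field_simp
      nlinarith [hsum1, hsum2]
    have hprod : Real.exp (-(c * w r)) ≤ ∏ s ∈ S₁, (1 - x s) := by
      have step1 : Real.exp (-(c * w r))
          ≤ Real.exp (-(2 * Real.log 2 * ∑ s ∈ S₁, x s)) :=
        Real.exp_le_exp.2 (by linarith)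
      have step2 : Real.exp (-(2 * Real.log 2 * ∑ s ∈ S₁, x s))
          = ∏ s ∈ S₁, Real.exp (-(2 * Real.log 2 * x s)) := by
        rw [← Real.exp_sum]
        congr 1
        rw [Finset.mul_sum, ← Finset.sum_neg_distrib]
      have step3 : ∏ s ∈ S₁, Real.exp (-(2 * Real.log 2 * x s)) ≤ ∏ s ∈ S₁, (1 - x s) :=
        Finset.prod_le_prod (fun s _ => le_of_lt (Real.exp_pos _))
          (fun s _ => lll_exp_le_one_sub (hx0 s) (hx2 s))
      calc Real.exp (-(c * w r)) ≤ _ := step1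
        _ = _ := step2
        _ ≤ _ := step3
    have h1 : x r * Real.exp (-(c * w r)) ≤ x r * ∏ s ∈ S₁, (1 - x s) :=
      mul_le_mul_of_nonneg_left hprod (hx0 r)
    have h2 : x r * Real.exp (-(c * w r)) = h r := by
      show (β ^ (w r) * h r) * Real.exp (-(c * w r)) = h r
      rw [hβw (w r), mul_right_comm, ← Real.exp_add]
      simp
    linarith [ha r]
  exact lll_aux μ E hmeas D x hx0 hx2 hind hkey
end
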